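/- arXiv:1805.06706 — 6 statements merged into one kernel-verified Lean document; each statement's English description precedes it below -/
import Mathlib

section
/- Let α_1, …, α_k ∈ 𝔽_{q^m} with Tr_{𝔽_{q^m}/𝔽_q}(α_i) = 0 for all i, let s be a positive integer coprime to m, write σ(z) = z^{q^s}, and suppose β_1, …, β_k ∈ 𝔽_{q^m} satisfy σ(β_i) − β_i = α_i for all i. Then α_1, …, α_k are linearly independent over 𝔽_q if and only if 1, β_1, …, β_k are linearly independent over 𝔽_q. -/
open Finset

/-- The explicit trace map of `𝔽_{q^m}/𝔽_q`: `Tr(x) = ∑_{i=0}^{m-1} x^{q^i}`. -/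
def fieldTrace (q m : ℕ) {L : Type*} [Field L] (x : L) : L :=
  ∑ i ∈ Finset.range m, x ^ q ^ i

/-- The `q`-rank of a vector with entries in `L`: the `K`-dimension of the
`K`-span of its entries. -/
noncomputable def rkq (K : Type*) {L : Type*} [Field K] [Field L] [Algebra K L]
    {ι : Type*} (v : ι → L) : ℕ :=
  Module.finrank K (Submodule.span K (Set.range v))

/-- The code `C_X`: the `L`-row space of the matrix `(I_k | X)`. -/
noncomputable def CX {L : Type*} [Field L] {k r : ℕ} (X : Matrix (Fin k) (Fin r) L) :
    Submodule L (Fin (k + r) → L) :=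
  Submodule.span L (Set.range fun i : Fin k =>
    Matrix.reindex (Equiv.refl (Fin k)) finSumFinEquiv
      (Matrix.fromCols (1 : Matrix (Fin k) (Fin k) L) X) i)

/-- The minimum rank distance of a linear code `C`. -/
noncomputable def minRankDist (K : Type*) {L : Type*} [Field K] [Field L] [Algebra K L]
    {n : ℕ} (C : Submodule L (Fin n → L)) : ℕ :=
  sInf {d : ℕ | ∃ c ∈ C, c ≠ 0 ∧ rkq K c = d}

/-- `C` is a generalized Gabidulin code of parameter `s` and dimension `k`:
it is the `L`-row space of an `s`-Moore matrix `M_{s,k}(g)` for some `g` of full `q`-rank. -/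
def IsGabidulin (K : Type*) {L : Type*} [Field K] [Field L] [Algebra K L]
    (q s k : ℕ) {n : ℕ} (C : Submodule L (Fin n → L)) : Prop :=
  ∃ g : Fin n → L, rkq K g = n ∧
    C = Submodule.span L (Set.range fun i : Fin k => fun j => g j ^ q ^ (s * (i : ℕ)))

/-- The map `Φ_s` applying `x ↦ x^{q^s} - x` entrywise to a matrix. -/
def PhiS (q s : ℕ) {L : Type*} [Field L] {k r : ℕ} (X : Matrix (Fin k) (Fin r) L) :
    Matrix (Fin k) (Fin r) L :=
  Matrix.of fun i j => X i j ^ q ^ s - X i j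

/-- A matrix is superregular if all of its minors are nonzero. -/
def Superregular {L : Type*} [Field L] {a b : ℕ} (M : Matrix (Fin a) (Fin b) L) : Prop :=
  ∀ (t : ℕ) (f : Fin t → Fin a) (g : Fin t → Fin b),
    StrictMono f → StrictMono g → (M.submatrix f g).det ≠ 0


private lemma powFix {L : Type*} [Monoid L] {z : L} {a : ℕ} (h : z ^ a = z) :
    ∀ u, z ^ a ^ u = z
  | 0 => pow_one z
  | u + 1 => by rw [pow_succ, pow_mul, powFix h u, h]

private lemma frobFixMem {K L : Type*} [Field K] [Field L] [Algebra K L] [Fintype K]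
    (z : L) (hz : z ^ Fintype.card K = z) : ∃ c : K, algebraMap K L c = z := by
  classical
  set q := Fintype.card K with hqdef
  have hq2 : 1 < q := Fintype.one_lt_card
  set P : Polynomial L := Polynomial.X ^ q - Polynomial.X with hP
  have hdeg : P.natDegree = q := by
    rw [hP, Polynomial.natDegree_sub_eq_left_of_natDegree_lt]
    · exact Polynomial.natDegree_X_pow q
    · rw [Polynomial.natDegree_X_pow, Polynomial.natDegree_X]; omega
  have hP0 : P ≠ 0 := by
    intro h
    rw [h, Polynomial.natDegree_zero] at hdeg
    omega
  have hroot : ∀ w : L, w ^ q = w → w ∈ P.roots.toFinset := by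
    intro w hw
    rw [Multiset.mem_toFinset, Polynomial.mem_roots']
    refine ⟨hP0, ?_⟩
    simp [Polynomial.IsRoot, hP, hw]
  set S : Finset L := Finset.univ.image (algebraMap K L) with hS
  have hScard : S.card = q := by
    rw [hS, Finset.card_image_of_injective _ (algebraMap K L).injective, Finset.card_univ]
  have hSsub : S ⊆ P.roots.toFinset := by
    intro x hx
    simp only [hS, Finset.mem_image] at hx
    obtain ⟨c, -, rfl⟩ := hx
    exact hroot _ (by rw [← map_pow, FiniteField.pow_card])
  by_contra hcon
  push_neg at hcon
  have hzS : z ∉ S := by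
    simp only [hS, Finset.mem_image]
    rintro ⟨c, -, rfl⟩
    exact hcon c rfl
  have h1 : (insert z S).card ≤ P.roots.toFinset.card :=
    Finset.card_le_card (Finset.insert_subset (hroot z hz) hSsub)
  have h2 : P.roots.toFinset.card ≤ q :=
    le_trans (Multiset.toFinset_card_le _) (le_trans (Polynomial.card_roots' P) hdeg.le)
  rw [Finset.card_insert_of_notMem hzS, hScard] at h1
  omega

/-- if `Tr(αᵢ) = 0` and `σ(βᵢ) - βᵢ = αᵢ` (with `σ(z) = z^{q^s}`), then
`α₁, …, α_k` are `𝔽_q`-linearly independent iff `1, β₁, …, β_k` are. -/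
theorem stmt5 {K L : Type*} [Field K] [Field L] [Algebra K L] [Fintype K] [Fintype L]
    (q m s : ℕ) (hq : Fintype.card K = q) (hm : Module.finrank K L = m)
    (hs : 0 < s) (hsm : Nat.Coprime s m)
    (k : ℕ) (α β : Fin k → L)
    (hα : ∀ i, fieldTrace q m (α i) = 0)
    (hβ : ∀ i, β i ^ q ^ s - β i = α i) :
    LinearIndependent K α ↔ LinearIndependent K (Fin.cons (1 : L) β : Fin (k + 1) → L) := by
  classical
  have hq2 : 1 < q := hq ▸ Fintype.one_lt_card
  have hm1 : 0 < m := hm ▸ Module.finrank_pos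
  obtain ⟨p, hpK⟩ := CharP.exists K
  haveI := hpK
  obtain ⟨f, hpprime, hcardK⟩ := FiniteField.card K p
  haveI : Fact p.Prime := ⟨hpprime⟩
  haveI : CharP L p := charP_of_injective_algebraMap (algebraMap K L).injective p
  set A := algebraMap K L with hA
  set frob : L →+* L := iterateFrobenius L p ((f : ℕ) * s) with hfrobdef
  have hqp : q = p ^ (f : ℕ) := by rw [← hq, hcardK]
  have hfrob : ∀ x : L, frob x = x ^ q ^ s := by
    intro x
    rw [hfrobdef, iterateFrobenius_def, hqp, ← pow_mul]
  have hKfix : ∀ c : K, A c ^ q ^ s = A c := by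
    intro c
    rw [← map_pow]
    congr 1
    exact powFix (by rw [← hq]; exact FiniteField.pow_card c) s
  have hfix : ∀ z : L, z ^ q ^ s = z → ∃ c : K, A c = z := by
    intro z hz
    have hzq : z ^ q = z := by
      have hzm : z ^ q ^ m = z := by
        have := FiniteField.pow_card z
        rwa [Module.card_eq_pow_finrank (K := K) (V := L), hq, hm] at this
      rcases eq_or_lt_of_le (Nat.one_le_iff_ne_zero.mpr hm1.ne') with h1 | h1
      · rw [← pow_one q]
        rw [← h1] at hzm
        exact hzm
      · obtain ⟨u, -, hu⟩ := Nat.exists_mul_mod_eq_one_of_coprime hsm h1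
        have hdm : m * (s * u / m) + 1 = s * u := by
          conv_rhs => rw [← Nat.div_add_mod (s * u) m]
          rw [hu]
        have h3 : z ^ q ^ (s * u) = z := by
          rw [pow_mul]; exact powFix hz u
        have h4 : z ^ q ^ (m * (s * u / m)) = z := by
          rw [pow_mul]; exact powFix hzm (s * u / m)
        rw [← hdm, pow_succ, pow_mul] at h3
        rw [h4] at h3
        exact h3
    rw [← hq] at hzq
    exact frobFixMem z hzq
  constructor
  · intro hLI
    rw [Fintype.linearIndependent_iff] at hLI ⊢
    intro g hg
    rw [Fin.sum_univ_succ, Fin.cons_zero] at hg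
    simp only [Fin.cons_succ] at hg
    have hg' : A (g 0) + ∑ i : Fin k, g i.succ • β i = 0 := by
      rw [Algebra.smul_def, mul_one] at hg
      exact hg
    have key : ∑ i : Fin k, g i.succ • α i = 0 := by
      have heq : ∑ i : Fin k, g i.succ • α i
          = frob (A (g 0) + ∑ i : Fin k, g i.succ • β i)
            - (A (g 0) + ∑ i : Fin k, g i.succ • β i) := by
        rw [map_add, map_sum]
        have e1 : frob (A (g 0)) = A (g 0) := by rw [hfrob]; exact hKfix _
        have e2 : ∀ i : Fin k, frob (g i.succ • β i) = g i.succ • (β i ^ q ^ s) := by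
          intro i
          rw [hfrob, Algebra.smul_def, Algebra.smul_def, mul_pow, hKfix]
        rw [e1]
        simp_rw [e2]
        have e3 : ∀ i : Fin k, g i.succ • α i
            = g i.succ • (β i ^ q ^ s) - g i.succ • β i := by
          intro i
          rw [← smul_sub, hβ]
        simp_rw [e3]
        rw [Finset.sum_sub_distrib]
        ring
      rw [hg', map_zero, sub_zero] at heq
      exact heq
    have hzero : ∀ i : Fin k, g i.succ = 0 := hLI (fun i => g i.succ) key
    have hg0 : g 0 = 0 := by
      have : A (g 0) = 0 := by
        have := hg'
        simp only [hzero, zero_smul, Finset.sum_const_zero, add_zero] at this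
        exact this
      exact (map_eq_zero A).mp this
    intro i
    refine Fin.cases hg0 hzero i
  · intro hLI
    rw [Fintype.linearIndependent_iff] at hLI ⊢
    intro g hg
    set w : L := ∑ i : Fin k, g i • β i with hw
    have hwfix : w ^ q ^ s = w := by
      have heq : w ^ q ^ s - w = ∑ i : Fin k, g i • α i := by
        rw [← hfrob, hw, map_sum]
        have e2 : ∀ i : Fin k, frob (g i • β i) = g i • (β i ^ q ^ s) := by
          intro i
          rw [hfrob, Algebra.smul_def, Algebra.smul_def, mul_pow, hKfix]
        simp_rw [e2]
        have e3 : ∀ i : Fin k, g i • α i = g i • (β i ^ q ^ s) - g i • β i := by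
          intro i
          rw [← smul_sub, hβ]
        simp_rw [e3]
        rw [Finset.sum_sub_distrib]
      rw [hg] at heq
      exact sub_eq_zero.mp heq
    obtain ⟨c, hc⟩ := hfix w hwfix
    set G : Fin (k + 1) → K := Fin.cons (-c) g with hG
    have hGsum : ∑ j : Fin (k + 1), G j • (Fin.cons (1 : L) β : Fin (k + 1) → L) j = 0 := by
      rw [Fin.sum_univ_succ]
      simp only [hG, Fin.cons_zero, Fin.cons_succ]
      rw [Algebra.smul_def, mul_one, map_neg, hc, ← hw]
      ring
    have hzero := hLI G hGsum
    intro i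
    have := hzero i.succ
    rwa [hG, Fin.cons_succ] at this
end

section
/- Let X ∈ 𝔽_{q^m}^{k×(n−k)}, let B ∈ 𝔽_q^{k×(n−k)} be a matrix with all entries in the base field 𝔽_q, and let s be a positive integer coprime to m. If the code C_X is a generalized Gabidulin code of parameter s, then the code C_{X+B} is a generalized Gabidulin code of parameter s. -/
open Finset

noncomputable def phiB {L : Type*} [Field L] {k r : ℕ}
    (C : Matrix (Fin k) (Fin r) L) :
    (Fin (k + r) → L) →ₗ[L] (Fin (k + r) → L) where
  toFun v := fun j => v j + Sum.elim (fun _ : Fin k => (0 : L))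
      (fun b : Fin r => ∑ a : Fin k, v (finSumFinEquiv (Sum.inl a)) * C a b)
      (finSumFinEquiv.symm j)
  map_add' u v := by
    funext j
    rcases h : finSumFinEquiv.symm j with a | b <;>
      simp [h, Finset.sum_add_distrib, add_mul] <;> ring
  map_smul' c v := by
    funext j
    rcases h : finSumFinEquiv.symm j with a | b <;>
      simp [h, Finset.mul_sum, mul_add, mul_assoc]

lemma phiB_inl {L : Type*} [Field L] {k r : ℕ} (C : Matrix (Fin k) (Fin r) L)
    (v : Fin (k + r) → L) (a : Fin k) :
    phiB C v (finSumFinEquiv (Sum.inl a)) = v (finSumFinEquiv (Sum.inl a)) := by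
  simp [phiB]

lemma phiB_inr {L : Type*} [Field L] {k r : ℕ} (C : Matrix (Fin k) (Fin r) L)
    (v : Fin (k + r) → L) (b : Fin r) :
    phiB C v (finSumFinEquiv (Sum.inr b)) = v (finSumFinEquiv (Sum.inr b)) +
      ∑ a : Fin k, v (finSumFinEquiv (Sum.inl a)) * C a b := by
  simp [phiB]

/-- if `C_X` is a generalized Gabidulin code of parameter `s` and `B` has all
entries in the base field `𝔽_q`, then `C_{X+B}` is a generalized Gabidulin code of
parameter `s`. -/
theorem stmt7 {K L : Type*} [Field K] [Field L] [Algebra K L] [Fintype K] [Fintype L]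
    (q m k r s : ℕ) (hq : Fintype.card K = q) (hm : Module.finrank K L = m)
    (hk : 0 < k) (hr : 0 < r) (hnm : k + r ≤ m) (hs : 0 < s) (hsm : Nat.Coprime s m)
    (X : Matrix (Fin k) (Fin r) L) (B : Matrix (Fin k) (Fin r) K)
    (hX : IsGabidulin K q s k (CX X)) :
    IsGabidulin K q s k (CX (X + B.map (algebraMap K L))) := by
  classical
  classical
  obtain ⟨g, hg, hCX⟩ := hX
  set B' := B.map (algebraMap K L) with hB'
  set φ := phiB B' with hφ
  -- characteristic setup
  set p := ringChar K with hpdef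
  haveI : CharP K p := ringChar.charP K
  obtain ⟨t, hp, hcardK⟩ := FiniteField.card K p
  haveI : CharP L p := charP_of_injective_algebraMap (algebraMap K L).injective p
  haveI : Fact p.Prime := ⟨hp⟩
  have hq' : q = p ^ (t : ℕ) := by rw [← hq, hcardK]
  have hfrob : ∀ (u : ℕ) (x : L), x ^ q ^ u = iterateFrobenius L p ((t : ℕ) * u) x := by
    intro u x
    rw [iterateFrobenius_def, pow_mul, ← hq']
  have halg : ∀ (u : ℕ) (c : K), (algebraMap K L c) ^ q ^ u = algebraMap K L c := by
    intro u c
    rw [← map_pow]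
    congr 1
    rw [← hq]
    exact FiniteField.pow_card_pow u c
  have hB'fix : ∀ (u : ℕ) (a : Fin k) (b : Fin r),
      iterateFrobenius L p ((t : ℕ) * u) (B' a b) = B' a b := by
    intro u a b
    rw [← hfrob]
    exact halg u (B a b)
  -- rows transform correctly
  have hrow : ∀ i : Fin k,
      φ (Matrix.reindex (Equiv.refl (Fin k)) finSumFinEquiv
          (Matrix.fromCols (1 : Matrix (Fin k) (Fin k) L) X) i)
        = Matrix.reindex (Equiv.refl (Fin k)) finSumFinEquiv
          (Matrix.fromCols (1 : Matrix (Fin k) (Fin k) L) (X + B')) i := by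
    intro i
    funext j
    obtain ⟨x, rfl⟩ := finSumFinEquiv.surjective j
    cases x with
    | inl a =>
      rw [hφ, phiB_inl]
      simp
    | inr b =>
      rw [hφ, phiB_inr]
      simp [Matrix.one_apply, Matrix.add_apply]
  -- Moore rows transform correctly
  have hM : ∀ i : Fin k,
      φ (fun j => g j ^ q ^ (s * (i : ℕ))) = fun j => (φ g) j ^ q ^ (s * (i : ℕ)) := by
    intro i
    funext j
    obtain ⟨x, rfl⟩ := finSumFinEquiv.surjective j
    cases x with
    | inl a =>
      rw [hφ, phiB_inl, phiB_inl]
    | inr b =>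
      rw [hφ, phiB_inr, phiB_inr]
      simp only [hfrob (s * (i : ℕ))]
      rw [map_add, map_sum]
      congr 1
      refine Finset.sum_congr rfl fun a _ => ?_
      rw [map_mul, hB'fix]
  -- C_{X+B} is the image of C_X under φ
  have key : CX (X + B') = Submodule.map φ (CX X) := by
    rw [CX, CX, Submodule.map_span, ← Set.range_comp]
    congr 1
    exact (congrArg Set.range (funext hrow)).symm
  -- span equality for rkq
  have g'l : ∀ a : Fin k, φ g (finSumFinEquiv (Sum.inl a)) = g (finSumFinEquiv (Sum.inl a)) :=
    fun a => by rw [hφ, phiB_inl]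
  have g'r : ∀ b : Fin r, φ g (finSumFinEquiv (Sum.inr b)) = g (finSumFinEquiv (Sum.inr b)) +
      ∑ a : Fin k, B a b • g (finSumFinEquiv (Sum.inl a)) := by
    intro b
    rw [hφ, phiB_inr]
    congr 1
    refine Finset.sum_congr rfl fun a _ => ?_
    rw [Algebra.smul_def, mul_comm]
    rfl
  have hspan : Submodule.span K (Set.range (φ g)) = Submodule.span K (Set.range g) := by
    apply le_antisymm <;> rw [Submodule.span_le]
    · rintro _ ⟨j, rfl⟩
      obtain ⟨x, rfl⟩ := finSumFinEquiv.surjective j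
      cases x with
      | inl a =>
        rw [g'l]
        exact Submodule.subset_span ⟨_, rfl⟩
      | inr b =>
        rw [g'r]
        exact Submodule.add_mem _ (Submodule.subset_span ⟨_, rfl⟩)
          (Submodule.sum_mem _ fun a _ =>
            Submodule.smul_mem _ _ (Submodule.subset_span ⟨_, rfl⟩))
    · rintro _ ⟨j, rfl⟩
      obtain ⟨x, rfl⟩ := finSumFinEquiv.surjective j
      cases x with
      | inl a =>
        rw [← g'l]
        exact Submodule.subset_span ⟨_, rfl⟩
      | inr b =>
        have h1 : g (finSumFinEquiv (Sum.inr b)) = φ g (finSumFinEquiv (Sum.inr b)) -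
            ∑ a : Fin k, B a b • φ g (finSumFinEquiv (Sum.inl a)) := by
          simp only [g'r, g'l]
          rw [add_sub_cancel_right]
        rw [h1]
        exact Submodule.sub_mem _ (Submodule.subset_span ⟨_, rfl⟩)
          (Submodule.sum_mem _ fun a _ =>
            Submodule.smul_mem _ _ (Submodule.subset_span ⟨_, rfl⟩))
  refine ⟨φ g, ?_, ?_⟩
  · unfold rkq at hg ⊢
    rw [hspan]
    exact hg
  · rw [key, hCX, Submodule.map_span, ← Set.range_comp]
    congr 1
    exact congrArg Set.range (funext hM)
end

section
/- Let X = (x_{i,j}) ∈ 𝔽_{q^m}^{k×(n−k)}. (1) If there exists a row index i such that the elements 1, x_{i,1}, …, x_{i,n−k} are linearly dependent over 𝔽_q (i.e., rk_q(1, x_{i,1}, …, x_{i,n−k}) < n−k+1), then C_X is not MRD. (2) If there exists a column index j such that 1, x_{1,j}, …, x_{k,j} are linearly dependent over 𝔽_q (i.e., rk_q(1, x_{1,j}, …, x_{k,j}) < k+1), then C_X is not MRD. -/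
open Finset

/-- (1) if for some row `i` the elements `1, x_{i,1}, …, x_{i,r}` are
`𝔽_q`-linearly dependent then `C_X` is not MRD; (2) if for some column `j` the elements
`1, x_{1,j}, …, x_{k,j}` are `𝔽_q`-linearly dependent then `C_X` is not MRD. -/

theorem stmt8 {K L : Type*} [Field K] [Field L] [Algebra K L] [Fintype K] [Fintype L]
    (q m k r : ℕ) (hq : Fintype.card K = q) (hm : Module.finrank K L = m)
    (hk : 0 < k) (hr : 0 < r) (hnm : k + r ≤ m)
    (X : Matrix (Fin k) (Fin r) L) :
    ((∃ i : Fin k, rkq K (Fin.cons (1 : L) (X i) : Fin (r + 1) → L) < r + 1) →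
      minRankDist K (CX X) ≠ r + 1) ∧
    ((∃ j : Fin r, rkq K (Fin.cons (1 : L) (fun i => X i j) : Fin (k + 1) → L) < k + 1) →
      minRankDist K (CX X) ≠ r + 1) := by
  classical
  have hFD : FiniteDimensional K L := Module.Finite.of_finite
  set G : Fin k → (Fin (k + r) → L) := fun i =>
    Matrix.reindex (Equiv.refl (Fin k)) finSumFinEquiv
      (Matrix.fromCols (1 : Matrix (Fin k) (Fin k) L) X) i with hG
  have hGmem : ∀ i, G i ∈ CX X := fun i => Submodule.subset_span ⟨i, rfl⟩
  have hGval : ∀ (i : Fin k) (s : Fin k ⊕ Fin r), G i (finSumFinEquiv s) =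
      Matrix.fromCols (1 : Matrix (Fin k) (Fin k) L) X i s := by
    intro i s
    simp [hG, Matrix.reindex_apply, Matrix.submatrix_apply]
  -- a generic bound: any nonzero codeword gives an upper bound on minRankDist
  have hle : ∀ c ∈ CX X, c ≠ 0 → minRankDist K (CX X) ≤ rkq K c := by
    intro c hc hc0
    exact Nat.sInf_le ⟨c, hc, hc0, rfl⟩
  constructor
  · rintro ⟨i, hi⟩
    have hne : G i ≠ 0 := by
      intro h0
      have := congrFun h0 (finSumFinEquiv (Sum.inl i))
      rw [hGval] at this
      simp [Matrix.fromCols] at this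
    have hsub : Set.range (G i) ⊆
        ↑(Submodule.span K (Set.range (Fin.cons (1 : L) (X i) : Fin (r + 1) → L))) := by
      rintro _ ⟨p, rfl⟩
      obtain ⟨s, rfl⟩ := finSumFinEquiv.surjective p
      rw [hGval]
      cases s with
      | inl t =>
        rcases eq_or_ne i t with h | h
        · have h1 : Matrix.fromCols (1 : Matrix (Fin k) (Fin k) L) X i (Sum.inl t) = 1 := by
            simp [Matrix.fromCols, h]
          rw [h1]
          exact Submodule.subset_span ⟨0, by simp⟩
        · have h1 : Matrix.fromCols (1 : Matrix (Fin k) (Fin k) L) X i (Sum.inl t) = 0 := by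
            simp [Matrix.fromCols, Matrix.one_apply, h]
          rw [h1]
          exact Submodule.zero_mem _
      | inr t =>
        have h1 : Matrix.fromCols (1 : Matrix (Fin k) (Fin k) L) X i (Sum.inr t) = X i t := by
          simp [Matrix.fromCols]
        rw [h1]
        exact Submodule.subset_span ⟨t.succ, by simp⟩
    have hrk : rkq K (G i) ≤ rkq K (Fin.cons (1 : L) (X i) : Fin (r + 1) → L) :=
      Submodule.finrank_mono (Submodule.span_le.mpr hsub)
    have := hle (G i) (hGmem i) hne
    omega
  · rintro ⟨j, hj⟩
    set v : Fin (k + 1) → L := Fin.cons 1 (fun i => X i j) with hv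
    have hdep : ¬ LinearIndependent K v := by
      intro hind
      have h1 := finrank_span_eq_card hind
      rw [Fintype.card_fin] at h1
      rw [rkq] at hj
      omega
    obtain ⟨a, hsum, i0, hi0⟩ := Fintype.not_linearIndependent_iff.mp hdep
    set c : Fin (k + r) → L := ∑ i : Fin k, a i.succ • G i with hc
    have hcmem : c ∈ CX X := by
      refine Submodule.sum_mem _ fun i _ => ?_
      exact Submodule.smul_of_tower_mem _ _ (hGmem i)
    have hcval : ∀ s : Fin k ⊕ Fin r, c (finSumFinEquiv s) =
        ∑ i : Fin k, a i.succ • Matrix.fromCols (1 : Matrix (Fin k) (Fin k) L) X i s := by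
      intro s
      rw [hc]
      simp only [Finset.sum_apply, Pi.smul_apply]
      exact Finset.sum_congr rfl fun i _ => by rw [hGval]
    have hcinl : ∀ t : Fin k, c (finSumFinEquiv (Sum.inl t)) = a t.succ • (1 : L) := by
      intro t
      rw [hcval]
      have : ∀ i : Fin k, a i.succ • Matrix.fromCols (1 : Matrix (Fin k) (Fin k) L) X i
          (Sum.inl t) = if i = t then a i.succ • (1 : L) else 0 := by
        intro i
        by_cases h : i = t <;> simp [Matrix.fromCols, Matrix.one_apply, h]
      rw [Finset.sum_congr rfl fun i _ => this i]
      simp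
    -- the dependence relation
    have hsum' : a 0 • (1 : L) + ∑ i : Fin k, a i.succ • X i j = 0 := by
      have := hsum
      rw [Fin.sum_univ_succ] at this
      simpa [hv] using this
    have hcinrj : c (finSumFinEquiv (Sum.inr j)) = (-(a 0)) • (1 : L) := by
      rw [hcval]
      have h1 : ∀ i : Fin k, Matrix.fromCols (1 : Matrix (Fin k) (Fin k) L) X i
          (Sum.inr j) = X i j := fun i => by simp [Matrix.fromCols]
      rw [Finset.sum_congr rfl fun i _ => by rw [h1]]
      rw [neg_smul]
      exact eq_neg_of_add_eq_zero_right hsum'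
    -- some coefficient a i.succ is nonzero
    have ha : ∃ i : Fin k, a i.succ ≠ 0 := by
      by_contra h
      push_neg at h
      have ha0 : a 0 • (1 : L) = 0 := by
        rw [← hsum']
        simp [h]
      have : a 0 = 0 := by
        rcases smul_eq_zero.mp ha0 with h' | h'
        · exact h'
        · exact absurd h' one_ne_zero
      exact hi0 (Fin.cases this h i0)
    obtain ⟨i1, hi1⟩ := ha
    have hne : c ≠ 0 := by
      intro h0
      have := congrFun h0 (finSumFinEquiv (Sum.inl i1))
      rw [hcinl] at this
      simp only [Pi.zero_apply] at this
      rcases smul_eq_zero.mp this with h' | h'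
      · exact hi1 h'
      · exact one_ne_zero h'
    -- rank bound
    set w : Fin r → L := fun t => if t = j then (1 : L) else c (finSumFinEquiv (Sum.inr t))
      with hw
    have hwj : w j = 1 := by simp [hw]
    have hsub : Set.range c ⊆ ↑(Submodule.span K (Set.range w)) := by
      rintro _ ⟨p, rfl⟩
      obtain ⟨s, rfl⟩ := finSumFinEquiv.surjective p
      cases s with
      | inl t =>
        rw [hcinl]
        rw [← hwj]
        exact Submodule.smul_mem _ _ (Submodule.subset_span ⟨j, rfl⟩)
      | inr t =>
        rcases eq_or_ne t j with h | h
        · rw [h, hcinrj, ← hwj]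
          exact Submodule.smul_mem _ _ (Submodule.subset_span ⟨j, rfl⟩)
        · refine Submodule.subset_span ⟨t, ?_⟩
          simp [hw, h]
    have hrk : rkq K c ≤ r := by
      have h1 : rkq K c ≤ Module.finrank K (Submodule.span K (Set.range w)) :=
        Submodule.finrank_mono (Submodule.span_le.mpr hsub)
      have h2 := finrank_range_le_card (R := K) w
      rw [Fintype.card_fin] at h2
      exact h1.trans h2
    have := hle c hcmem hne
    omega
end

section
/- Let s be a positive integer coprime to m, let α ∈ 𝔽_{q^m}^k and β ∈ 𝔽_{q^m}^{n−k} satisfy supp_q(β) ⊆ supp_q(α)^×, and let X ∈ 𝔽_{q^m}^{k×(n−k)} satisfy Φ_s(X) = α^T β. (1) If rk_q(α) < k, then the code C_X is not MRD. (2) If rk_q(β) < n−k, then the code C_X is not MRD. -/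
open Finset

section Aux

variable {K L : Type*} [Field K] [Field L] [Algebra K L] [Fintype K] [Fintype L]

private lemma aux_pow_pow {x : L} {Q : ℕ} (hx : x ^ Q = x) : ∀ a : ℕ, x ^ Q ^ a = x
  | 0 => pow_one x
  | a + 1 => by rw [pow_succ, pow_mul, aux_pow_pow hx a, hx]

private lemma aux_fix_q (q : ℕ) (hq : Fintype.card K = q) {x : L} (hx : x ^ q = x) :
    ∃ a : K, algebraMap K L a = x := by
  classical
  have hq1 : 1 < q := hq ▸ Fintype.one_lt_card
  set T : Finset L := Finset.univ.filter (fun y => y ^ q = y) with hT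
  set F : Finset L := Finset.univ.image (algebraMap K L) with hF
  have hFT : F ⊆ T := by
    intro y hy
    simp only [hF, Finset.mem_image] at hy
    obtain ⟨a, -, rfl⟩ := hy
    simp only [hT, Finset.mem_filter, Finset.mem_univ, true_and]
    rw [← map_pow, ← hq, FiniteField.pow_card]
  have hTcard : T.card ≤ q := by
    have hne : (Polynomial.X ^ q - Polynomial.X : Polynomial L) ≠ 0 :=
      FiniteField.X_pow_card_sub_X_ne_zero L hq1
    have hsub : T ⊆ (Polynomial.X ^ q - Polynomial.X : Polynomial L).roots.toFinset := by
      intro y hy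
      simp only [hT, Finset.mem_filter, Finset.mem_univ, true_and] at hy
      rw [Multiset.mem_toFinset, Polynomial.mem_roots hne]
      simp [Polynomial.IsRoot, hy, sub_eq_zero]
    calc T.card ≤ _ := Finset.card_le_card hsub
      _ ≤ (Polynomial.X ^ q - Polynomial.X : Polynomial L).roots.card :=
          Multiset.toFinset_card_le _
      _ ≤ (Polynomial.X ^ q - Polynomial.X : Polynomial L).natDegree := Polynomial.card_roots' _
      _ = q := FiniteField.X_pow_card_sub_X_natDegree_eq L hq1
  have hFcard : F.card = q := by
    rw [hF, Finset.card_image_of_injective _ (algebraMap K L).injective,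
      Finset.card_univ, hq]
  have hTF : F = T := Finset.eq_of_subset_of_card_le hFT (by omega)
  have hxT : x ∈ T := by simp [hT, hx]
  rw [← hTF, hF, Finset.mem_image] at hxT
  obtain ⟨a, -, ha⟩ := hxT
  exact ⟨a, ha⟩

private lemma aux_frob (q s : ℕ) (hq : Fintype.card K = q) :
    ∃ φ : L →+* L, ∀ x : L, φ x = x ^ q ^ s := by
  set p := ringChar K with hp
  haveI hKp : CharP K p := ringChar.charP K
  have hpprime : p.Prime := CharP.char_is_prime K p
  haveI : CharP L p := charP_of_injective_algebraMap (algebraMap K L).injective p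
  haveI : Fact p.Prime := ⟨hpprime⟩
  obtain ⟨e, -, hcard⟩ := FiniteField.card K p
  refine ⟨iterateFrobenius L p ((e : ℕ) * s), fun x => ?_⟩
  rw [iterateFrobenius_def]
  congr 1
  rw [pow_mul, ← hcard, hq]

private lemma aux_fix_qs (q m s : ℕ) (hq : Fintype.card K = q)
    (hm : Module.finrank K L = m) (hm1 : 1 < m) (hsm : Nat.Coprime s m)
    {x : L} (hx : x ^ q ^ s = x) : ∃ a : K, algebraMap K L a = x := by
  have hcardL : Fintype.card L = q ^ m := by rw [← hq, ← hm]; exact Module.card_eq_pow_finrank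
  have hxm : x ^ q ^ m = x := by
    conv_lhs => rw [← hcardL]
    exact FiniteField.pow_card x
  obtain ⟨a, -, ha⟩ := Nat.exists_mul_mod_eq_one_of_coprime hsm hm1
  have hdiv : s * a = m * (s * a / m) + 1 := by
    have := Nat.div_add_mod (s * a) m
    omega
  have h1 : x ^ q ^ (s * a) = x := by
    rw [pow_mul]
    exact aux_pow_pow hx a
  have h2 : x ^ q ^ (m * (s * a / m)) = x := by
    rw [pow_mul]
    exact aux_pow_pow hxm _
  have hxq : x ^ q = x := by
    calc x ^ q = (x ^ q ^ (m * (s * a / m))) ^ q := by rw [h2]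
      _ = x ^ (q ^ (m * (s * a / m)) * q) := (pow_mul x _ q).symm
      _ = x ^ q ^ (m * (s * a / m) + 1) := by rw [pow_succ]
      _ = x ^ q ^ (s * a) := by rw [← hdiv]
      _ = x := h1
  exact aux_fix_q q hq hxq

end Aux

/-- let `supp_q(β) ⊆ supp_q(α)^×` and `Φ_s(X) = αᵀβ`. If `rk_q(α) < k` or
`rk_q(β) < r`, then `C_X` is not MRD. -/
theorem stmt11 {K L : Type*} [Field K] [Field L] [Algebra K L] [Fintype K] [Fintype L]
    (q m k r s : ℕ) (hq : Fintype.card K = q) (hm : Module.finrank K L = m)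
    (hk : 0 < k) (hr : 0 < r) (hnm : k + r ≤ m) (hs : 0 < s) (hsm : Nat.Coprime s m)
    (α : Fin k → L) (β : Fin r → L)
    (hsupp : ∀ x ∈ Submodule.span K (Set.range β), ∀ y ∈ Submodule.span K (Set.range α),
      fieldTrace q m (y * x) = 0)
    (X : Matrix (Fin k) (Fin r) L) (hX : PhiS q s X = Matrix.vecMulVec α β) :
    (rkq K α < k → minRankDist K (CX X) ≠ r + 1) ∧
    (rkq K β < r → minRankDist K (CX X) ≠ r + 1) := by
  classical
  have hm1 : 1 < m := lt_of_lt_of_le (by omega) hnm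
  have hXij : ∀ i j, X i j ^ q ^ s - X i j = α i * β j := by
    intro i j
    have h := congrFun (congrFun hX i) j
    simpa [PhiS, Matrix.vecMulVec_apply] using h
  obtain ⟨φ, hφ⟩ := aux_frob (K := K) (L := L) q s hq
  have hφalg : ∀ a : K, φ (algebraMap K L a) = algebraMap K L a := by
    intro a
    rw [hφ, ← map_pow, ← hq, FiniteField.pow_card_pow]
  set g : Fin k → (Fin (k + r) → L) := fun i =>
    Matrix.reindex (Equiv.refl (Fin k)) finSumFinEquiv
      (Matrix.fromCols (1 : Matrix (Fin k) (Fin k) L) X) i with hg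
  have hgdef : ∀ i j, g i j =
      Matrix.fromCols (1 : Matrix (Fin k) (Fin k) L) X i (finSumFinEquiv.symm j) :=
    fun i j => rfl
  have hCX : CX X = Submodule.span L (Set.range g) := rfl
  have key : ∀ c, c ∈ CX X → c ≠ 0 → rkq K c ≤ r → minRankDist K (CX X) ≠ r + 1 := by
    intro c hc hne hrk
    have hmem : rkq K c ∈ {d : ℕ | ∃ c ∈ CX X, c ≠ 0 ∧ rkq K c = d} := ⟨c, hc, hne, rfl⟩
    have hle : minRankDist K (CX X) ≤ rkq K c := Nat.sInf_le hmem
    omega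
  constructor
  · -- case 1 : rk α < k
    intro hα
    have hnli : ¬ LinearIndependent K α := by
      intro hli
      have h := finrank_span_eq_card hli
      rw [Fintype.card_fin] at h
      rw [rkq] at hα
      omega
    obtain ⟨lam, hlamsum, i₀, hi₀⟩ := Fintype.not_linearIndependent_iff.mp hnli
    set c : Fin (k + r) → L := fun j => ∑ i, algebraMap K L (lam i) * g i j with hcdef
    have hcmem : c ∈ CX X := by
      rw [hCX]
      have hce : c = ∑ i, algebraMap K L (lam i) • g i := by
        funext j
        simp [hcdef, Finset.sum_apply, Algebra.smul_def]
      rw [hce]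
      exact Submodule.sum_mem _ fun i _ =>
        Submodule.smul_mem _ _ (Submodule.subset_span (Set.mem_range_self i))
    have hid : ∀ i' : Fin k,
        c (finSumFinEquiv (Sum.inl i')) = algebraMap K L (lam i') := by
      intro i'
      have hgi : ∀ i : Fin k, g i (finSumFinEquiv (Sum.inl i')) = if i = i' then 1 else 0 :=
        fun i => by
          rw [hgdef, Equiv.symm_apply_apply, Matrix.fromCols_apply_inl, Matrix.one_apply]
      simp only [hcdef, hgi, mul_ite, mul_one, mul_zero, Finset.sum_ite_eq',
        Finset.mem_univ, if_true]
    have hcne : c ≠ 0 := by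
      intro h0
      apply hi₀
      have h := congrFun h0 (finSumFinEquiv (Sum.inl i₀))
      rw [hid] at h
      exact (algebraMap K L).injective (by simpa using h)
    have hfix : ∀ j' : Fin r,
        (∑ i, algebraMap K L (lam i) * X i j') ^ q ^ s
          = ∑ i, algebraMap K L (lam i) * X i j' := by
      intro j'
      have h1 : (∑ i, algebraMap K L (lam i) * X i j') ^ q ^ s
          = ∑ i, algebraMap K L (lam i) * X i j' ^ q ^ s := by
        rw [← hφ, map_sum]
        refine Finset.sum_congr rfl fun i _ => ?_
        rw [map_mul, hφalg, hφ]
      rw [← sub_eq_zero, h1, ← Finset.sum_sub_distrib]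
      have h2 : ∀ i ∈ Finset.univ,
          algebraMap K L (lam i) * X i j' ^ q ^ s - algebraMap K L (lam i) * X i j'
            = (lam i • α i) * β j' := by
        intro i _
        rw [← mul_sub, hXij, Algebra.smul_def]
        ring
      rw [Finset.sum_congr rfl h2, ← Finset.sum_mul, hlamsum, zero_mul]
    have hrange : Set.range c ⊆ (Submodule.span K {(1 : L)} : Submodule K L) := by
      rintro _ ⟨j, rfl⟩
      have hmemK : ∀ z : L, (∃ a : K, algebraMap K L a = z) →
          z ∈ Submodule.span K {(1 : L)} := by
        rintro _ ⟨a, rfl⟩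
        exact Submodule.mem_span_singleton.mpr ⟨a, (Algebra.algebraMap_eq_smul_one a).symm⟩
      rcases hsym : finSumFinEquiv.symm j with i' | j'
      · have hj : j = finSumFinEquiv (Sum.inl i') := by
          rw [← hsym, Equiv.apply_symm_apply]
        rw [hj, hid]
        exact hmemK _ ⟨lam i', rfl⟩
      · have hcj : c j = ∑ i, algebraMap K L (lam i) * X i j' := by
          simp only [hcdef]
          refine Finset.sum_congr rfl fun i _ => ?_
          rw [hgdef, hsym, Matrix.fromCols_apply_inr]
        rw [hcj]
        exact hmemK _ (aux_fix_qs q m s hq hm hm1 hsm (hfix j'))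
    have hrk : rkq K c ≤ r := by
      rw [rkq]
      calc Module.finrank K (Submodule.span K (Set.range c))
          ≤ Module.finrank K (Submodule.span K {(1 : L)}) :=
            Submodule.finrank_mono (Submodule.span_le.mpr hrange)
        _ = 1 := finrank_span_singleton one_ne_zero
        _ ≤ r := hr
    exact key c hcmem hcne hrk
  · -- case 2 : rk β < r
    intro hβ
    have hnli : ¬ LinearIndependent K β := by
      intro hli
      have h := finrank_span_eq_card hli
      rw [Fintype.card_fin] at h
      rw [rkq] at hβ
      omega
    obtain ⟨mu, hmusum, j₀, hj₀⟩ := Fintype.not_linearIndependent_iff.mp hnli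
    have i₀ : Fin k := ⟨0, hk⟩
    have hcmem : g i₀ ∈ CX X := by
      rw [hCX]
      exact Submodule.subset_span (Set.mem_range_self i₀)
    have hcne : g i₀ ≠ 0 := by
      intro h0
      have h := congrFun h0 (finSumFinEquiv (Sum.inl i₀))
      rw [hgdef, Equiv.symm_apply_apply, Matrix.fromCols_apply_inl] at h
      simp [Matrix.one_apply] at h
    have hfix : (∑ j, algebraMap K L (mu j) * X i₀ j) ^ q ^ s
        = ∑ j, algebraMap K L (mu j) * X i₀ j := by
      have h1 : (∑ j, algebraMap K L (mu j) * X i₀ j) ^ q ^ s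
          = ∑ j, algebraMap K L (mu j) * X i₀ j ^ q ^ s := by
        rw [← hφ, map_sum]
        refine Finset.sum_congr rfl fun j _ => ?_
        rw [map_mul, hφalg, hφ]
      rw [← sub_eq_zero, h1, ← Finset.sum_sub_distrib]
      have h2 : ∀ j ∈ Finset.univ,
          algebraMap K L (mu j) * X i₀ j ^ q ^ s - algebraMap K L (mu j) * X i₀ j
            = α i₀ * (mu j • β j) := by
        intro j _
        rw [← mul_sub, hXij, Algebra.smul_def]
        ring
      rw [Finset.sum_congr rfl h2, ← Finset.mul_sum, hmusum, mul_zero]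
    obtain ⟨u, hu⟩ := aux_fix_qs q m s hq hm hm1 hsm hfix
    set v : Fin (r + 1) → L := Fin.cons 1 (fun j => X i₀ j) with hv
    have hvnli : ¬ LinearIndependent K v := by
      rw [Fintype.not_linearIndependent_iff]
      refine ⟨Fin.cons (-u) mu, ?_, ⟨j₀.succ, by simp [hj₀]⟩⟩
      rw [Fin.sum_univ_succ]
      simp only [Fin.cons_zero, Fin.cons_succ, hv]
      have hsum : (∑ j : Fin r, mu j • X i₀ j) = algebraMap K L u := by
        rw [hu]
        exact Finset.sum_congr rfl fun j _ => Algebra.smul_def (mu j) (X i₀ j)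
      rw [hsum, Algebra.smul_def, map_neg]
      ring
    have hvrank : Module.finrank K (Submodule.span K (Set.range v)) ≤ r := by
      have hle : Module.finrank K (Submodule.span K (Set.range v)) ≤ r + 1 := by
        have h := finrank_range_le_card (R := K) v
        rwa [Fintype.card_fin] at h
      have hne : Module.finrank K (Submodule.span K (Set.range v)) ≠ r + 1 := by
        intro h
        apply hvnli
        apply linearIndependent_iff_card_eq_finrank_span.mpr
        rw [Fintype.card_fin]
        exact h.symm
      omega
    have hsub : Submodule.span K (Set.range (g i₀)) ≤ Submodule.span K (Set.range v) := by
      rw [Submodule.span_le]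
      rintro _ ⟨j, rfl⟩
      rw [hgdef]
      rcases hsym : finSumFinEquiv.symm j with i' | j'
      · rw [Matrix.fromCols_apply_inl, Matrix.one_apply]
        split_ifs
        · exact Submodule.subset_span ⟨0, Fin.cons_zero _ _⟩
        · exact Submodule.zero_mem _
      · rw [Matrix.fromCols_apply_inr]
        exact Submodule.subset_span ⟨j'.succ, Fin.cons_succ _ _ _⟩
    have hrk : rkq K (g i₀) ≤ r := by
      rw [rkq]
      exact le_trans (Submodule.finrank_mono hsub) hvrank
    exact key (g i₀) hcmem hcne hrk
end

section
/- Let s be a positive integer coprime to m and X ∈ 𝔽_{q^m}^{k×(n−k)}. Then C_X is a generalized Gabidulin code of parameter s if and only if there exist α ∈ 𝔽_{q^m}^k and β ∈ 𝔽_{q^m}^{n−k} such that (a) rk_q(α) = k, (b) rk_q(β) = n−k, (c) supp_q(β) ⊆ supp_q(α)^×, and Φ_s(X) = α^T β. -/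
open Finset

namespace SGab


variable {K L : Type*} [Field K] [Field L] [Algebra K L]

lemma mul_apply' (σ τ : L ≃+* L) (x : L) : (σ * τ) x = σ (τ x) := rfl

lemma pow_succ_apply (σ : L ≃+* L) (i : ℕ) (x : L) :
    (σ ^ (i + 1)) x = (σ ^ i) (σ x) := by rw [pow_succ]; rfl

lemma pow_succ_apply' (σ : L ≃+* L) (i : ℕ) (x : L) :
    (σ ^ (i + 1)) x = σ ((σ ^ i) x) := by rw [pow_succ']; rfl

lemma symm_pow_apply (σ : L ≃+* L) (i : ℕ) (x : L) :
    (σ.symm ^ i) ((σ ^ i) x) = x := by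
  induction i with
  | zero => rfl
  | succ n ih =>
      rw [pow_succ_apply' σ, pow_succ_apply σ.symm]
      rw [σ.symm_apply_apply]; exact ih

/-- Fixed field hypothesis : the fixed points of `σ` are exactly the image of `K`. -/
def FixHyp (σ : L ≃+* L) (K : Type*) [Field K] [Algebra K L] : Prop :=
  ∀ x : L, σ x = x ↔ x ∈ Set.range (algebraMap K L)

lemma FixHyp.alg {σ : L ≃+* L} (hfix : FixHyp σ K) (c : K) :
    σ (algebraMap K L c) = algebraMap K L c := (hfix _).2 ⟨c, rfl⟩

lemma FixHyp.pow_alg {σ : L ≃+* L} (hfix : FixHyp σ K) (i : ℕ) (c : K) :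
    (σ ^ i) (algebraMap K L c) = algebraMap K L c := by
  induction i with
  | zero => rfl
  | succ n ih => rw [pow_succ_apply, hfix.alg, ih]

lemma FixHyp.symm {σ : L ≃+* L} (hfix : FixHyp σ K) : FixHyp σ.symm K := by
  intro x
  constructor
  · intro h
    have h2 : σ x = x := by conv_lhs => rw [← h]
                            rw [σ.apply_symm_apply]
    exact (hfix x).1 h2
  · rintro ⟨c, rfl⟩
    have := hfix.alg (σ := σ) c
    calc σ.symm (algebraMap K L c) = σ.symm (σ (algebraMap K L c)) := by rw [this]
      _ = _ := σ.symm_apply_apply _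

lemma FixHyp.pow_smul {σ : L ≃+* L} (hfix : FixHyp σ K) (i : ℕ) (c : K) (x : L) :
    (σ ^ i) (c • x) = c • (σ ^ i) x := by
  rw [Algebra.smul_def, Algebra.smul_def, map_mul, hfix.pow_alg]

/-- Evaluation of the twisted polynomial `∑_{i ≤ d} a i σ^i`. -/
noncomputable def sev (σ : L ≃+* L) (a : ℕ → L) (d : ℕ) (x : L) : L :=
  ∑ i ∈ Finset.range (d + 1), a i * (σ ^ i) x

lemma sev_add (σ : L ≃+* L) (a : ℕ → L) (d : ℕ) (x y : L) :
    sev σ a d (x + y) = sev σ a d x + sev σ a d y := by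
  simp [sev, map_add, mul_add, Finset.sum_add_distrib]

lemma sev_smul {σ : L ≃+* L} (hfix : FixHyp σ K) (a : ℕ → L) (d : ℕ) (c : K) (x : L) :
    sev σ a d (c • x) = c • sev σ a d x := by
  simp only [sev, hfix.pow_smul, Finset.smul_sum]
  exact Finset.sum_congr rfl fun i _ => mul_smul_comm c (a i) _

lemma sev_zero (σ : L ≃+* L) (a : ℕ → L) (d : ℕ) : sev σ a d 0 = 0 := by
  simp [sev]

/-- `sev` as a `K`-linear map. -/
noncomputable def sevLin (σ : L ≃+* L) (hfix : FixHyp σ K) (a : ℕ → L) (d : ℕ) :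
    L →ₗ[K] L where
  toFun := sev σ a d
  map_add' := sev_add σ a d
  map_smul' := sev_smul hfix a d

@[simp] lemma sevLin_apply (σ : L ≃+* L) (hfix : FixHyp σ K) (a : ℕ → L) (d : ℕ) (x : L) :
    sevLin σ hfix a d x = sev σ a d x := rfl

lemma sev_coeff_sub (σ : L ≃+* L) (a b : ℕ → L) (d : ℕ) (x : L) :
    sev σ (fun w => a w - b w) d x = sev σ a d x - sev σ b d x := by
  simp [sev, sub_mul, Finset.sum_sub_distrib]

lemma sev_coeff_mul (σ : L ≃+* L) (c : L) (a : ℕ → L) (d : ℕ) (x : L) :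
    sev σ (fun w => c * a w) d x = c * sev σ a d x := by
  simp [sev, Finset.mul_sum, mul_assoc]

lemma sev_coeff_sum {ι : Type*} (σ : L ≃+* L) (t : Finset ι) (f : ι → ℕ → L) (d : ℕ) (x : L) :
    sev σ (fun w => ∑ l ∈ t, f l w) d x = ∑ l ∈ t, sev σ (f l) d x := by
  simp [sev, Finset.sum_mul]
  exact Finset.sum_comm


lemma pow_zero_apply (σ : L ≃+* L) (x : L) : (σ ^ 0) x = x := rfl

lemma FixHyp.smul {σ : L ≃+* L} (hfix : FixHyp σ K) (c : K) (x : L) :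
    σ (c • x) = c • σ x := by
  rw [Algebra.smul_def, Algebra.smul_def, map_mul, hfix.alg]

lemma sev_shift (σ : L ≃+* L) (qq : ℕ → L) (d : ℕ) (x : L) :
    σ (sev σ (fun w => σ.symm (qq (w + 1))) d x) = sev σ qq (d + 1) x - qq 0 * x := by
  rw [sev, map_sum]
  have h1 : ∀ w, σ (σ.symm (qq (w+1)) * (σ ^ w) x) = qq (w+1) * (σ ^ (w+1)) x := by
    intro w; rw [map_mul, σ.apply_symm_apply, pow_succ_apply' σ w x]
  calc ∑ w ∈ range (d+1), σ (σ.symm (qq (w+1)) * (σ^w) x)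
      = ∑ w ∈ range (d+1), qq (w+1) * (σ^(w+1)) x := Finset.sum_congr rfl fun w _ => h1 w
    _ = sev σ qq (d+1) x - qq 0 * x := by
        rw [sev, Finset.sum_range_succ' (fun i => qq i * (σ^i) x) (d+1)]
        rw [pow_zero_apply]; ring

lemma evd (σ : L ≃+* L) (p : ℕ → L) (t : ℕ) (hdeg : ∀ i, t < i → p i = 0) (a b x : L) :
    sev σ (fun w => a * (if w = 0 then 0 else σ (p (w - 1))) + b * p w) (t + 1) x
      = a * σ (sev σ p t x) + b * sev σ p t x := by
  rw [sev]
  have split : ∀ w ∈ range (t+2),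
      (a * (if w = 0 then 0 else σ (p (w - 1))) + b * p w) * (σ^w) x
        = a * (if w = 0 then 0 else σ (p (w-1))) * (σ^w) x + b * p w * (σ^w) x := by
    intro w _; ring
  rw [Finset.sum_congr rfl split, Finset.sum_add_distrib]
  have e2 : ∑ w ∈ range (t+2), b * p w * (σ^w) x = b * sev σ p t x := by
    rw [Finset.sum_range_succ, hdeg (t+1) (by omega)]
    rw [sev, Finset.mul_sum]
    simp [mul_assoc]
  have e1 : ∑ w ∈ range (t+2), a * (if w = 0 then 0 else σ (p (w-1))) * (σ^w) x
      = a * σ (sev σ p t x) := by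
    rw [Finset.sum_range_succ' (fun w => a * (if w = 0 then 0 else σ (p (w-1))) * (σ^w) x) (t+1)]
    simp only [if_neg (Nat.succ_ne_zero _), Nat.add_sub_cancel]
    rw [sev, map_sum, Finset.mul_sum]
    have : ∀ w ∈ range (t+1), a * σ (p w) * (σ^(w+1)) x = a * σ (p w * (σ^w) x) := by
      intro w _; rw [map_mul, pow_succ_apply' σ w x]; ring
    rw [Finset.sum_congr rfl this]
    simp
  rw [e1, e2]

theorem rb (σ : L ≃+* L) (hfix : FixHyp σ K) :
    ∀ (d : ℕ) (a : ℕ → L), (∀ i, d < i → a i = 0) →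
    ∀ (v : Fin (d + 1) → L), LinearIndependent K v →
    (∀ j, sev σ a d (v j) = 0) → ∀ i, a i = 0 := by
  intro d
  induction d with
  | zero =>
      intro a hd v hv h0 i
      rcases Nat.eq_zero_or_pos i with h | h
      · subst h
        have h00 := h0 0
        rw [sev, Finset.sum_range_one, pow_zero_apply] at h00
        rcases mul_eq_zero.1 h00 with h' | h'
        · exact h'
        · exact absurd h' (hv.ne_zero 0)
      · exact hd i h
  | succ d ih =>
      intro a hd v hv h0
      have hv0 : v 0 ≠ 0 := hv.ne_zero 0
      set v0 := v 0 with hv0def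
      set c := σ v0 / v0 with hcdef
      have hσv0 : σ v0 ≠ 0 := by simpa using hv0
      have hcne : c ≠ 0 := div_ne_zero hσv0 hv0
      have hcv0 : c * v0 = σ v0 := div_mul_cancel₀ (σ v0) hv0
      let bA : ℕ → L := fun t => Nat.rec 0 (fun t prev => a (d + 2 - t) + prev * (σ ^ (d + 2 - t)) c) t
      have bA0 : bA 0 = 0 := rfl
      have bAsucc : ∀ t, bA (t+1) = a (d + 2 - t) + bA t * (σ ^ (d + 2 - t)) c := fun t => rfl
      set b : ℕ → L := fun w => bA (d + 2 - w) with hbdef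
      have brec : ∀ w, b w = a (w + 1) + b (w + 1) * (σ ^ (w + 1)) c := by
        intro w
        rcases le_or_gt w (d+1) with h | h
        · show bA (d + 2 - w) = a (w+1) + bA (d + 2 - (w+1)) * (σ ^ (w+1)) c
          rw [show d + 2 - w = (d + 1 - w) + 1 from by omega, bAsucc,
            show d + 2 - (d + 1 - w) = w + 1 from by omega,
            show d + 1 - w = d + 2 - (w + 1) from by omega]
        · show bA (d + 2 - w) = a (w+1) + bA (d + 2 - (w+1)) * (σ ^ (w+1)) c
          rw [show d + 2 - w = 0 from by omega, show d + 2 - (w+1) = 0 from by omega,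
            hd (w+1) (by omega), bA0]
          ring
      have bdeg : ∀ w, d < w → b w = 0 := by
        intro w hw
        rcases le_or_gt (d+2) w with h | h
        · show bA (d + 2 - w) = 0
          rw [show d + 2 - w = 0 from by omega]; exact bA0
        · have hw1 : w = d + 1 := by omega
          subst hw1
          show bA (d + 2 - (d+1)) = 0
          rw [show d + 2 - (d+1) = 1 from by omega,
            show bA 1 = a (d + 2 - 0) + bA 0 * (σ ^ (d + 2 - 0)) c from bAsucc 0, bA0,
            hd (d + 2 - 0) (by omega)]
          ring
      set r : L := a 0 + b 0 * c with hrdef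
      have ident : ∀ x, sev σ a (d+1) x = sev σ b d (σ x - c * x) + r * x := by
        intro x
        have e1 : sev σ b d (σ x - c * x)
            = (∑ w ∈ range (d+1), b w * (σ^(w+1)) x)
              - ∑ w ∈ range (d+1), b w * (σ^w) c * (σ^w) x := by
          rw [sev, ← Finset.sum_sub_distrib]
          refine Finset.sum_congr rfl fun w _ => ?_
          rw [map_sub, map_mul, pow_succ_apply σ w x]
          ring
        have e2 : sev σ a (d+1) x = a 0 * x + ∑ w ∈ range (d+1), a (w+1) * (σ^(w+1)) x := by
          rw [sev, Finset.sum_range_succ' (fun i => a i * (σ^i) x) (d+1), pow_zero_apply]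
          ring
        have e3 : ∀ w ∈ range (d+1), a (w+1) * (σ^(w+1)) x
            = b w * (σ^(w+1)) x - b (w+1) * (σ^(w+1)) c * (σ^(w+1)) x := by
          intro w _
          have := brec w
          have haw : a (w+1) = b w - b (w+1) * (σ^(w+1)) c := by
            rw [this]; ring
          rw [haw]; ring
        rw [e2, Finset.sum_congr rfl e3, Finset.sum_sub_distrib]
        have e4 : ∑ w ∈ range (d+1), b (w+1) * (σ^(w+1)) c * (σ^(w+1)) x
            = (∑ w ∈ range (d+1), b w * (σ^w) c * (σ^w) x) - b 0 * c * x := by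
          have eA := Finset.sum_range_succ' (fun w => b w * (σ^w) c * (σ^w) x) (d+1)
          have eB := Finset.sum_range_succ (fun w => b w * (σ^w) c * (σ^w) x) (d+1)
          rw [bdeg (d+1) (by omega)] at eB
          rw [pow_zero_apply, pow_zero_apply] at eA
          linear_combination eB - eA
        rw [e4, e1]
        ring
      have hDv0 : σ v0 - c * v0 = 0 := by rw [hcv0]; ring
      have hr : r = 0 := by
        have h00 := h0 0
        rw [ident v0, hDv0, sev_zero] at h00
        have : r * v0 = 0 := by linear_combination h00
        rcases mul_eq_zero.1 this with h' | h'
        · exact h'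
        · exact absurd h' hv0
      set w : Fin (d+1) → L := fun j => σ (v j.succ) - c * (v j.succ) with hwdef
      have h0' : ∀ j, sev σ b d (w j) = 0 := by
        intro j
        have := h0 j.succ
        rw [ident (v j.succ), hr, zero_mul, add_zero] at this
        exact this
      have hwind : LinearIndependent K w := by
        rw [Fintype.linearIndependent_iff]
        intro lam hlam
        set T : L := ∑ j, lam j • v j.succ with hTdef
        have hT : σ T - c * T = 0 := by
          rw [hTdef, map_sum, Finset.mul_sum, ← Finset.sum_sub_distrib]
          rw [← hlam]
          refine Finset.sum_congr rfl fun j _ => ?_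
          rw [hfix.smul, hwdef]
          rw [smul_sub, mul_smul_comm]
        have hvs : LinearIndependent K (v ∘ Fin.succ) := hv.comp Fin.succ (Fin.succ_injective _)
        rcases eq_or_ne T 0 with hT0 | hT0
        · intro j
          exact Fintype.linearIndependent_iff.1 hvs lam (by simpa [hTdef] using hT0) j
        · exfalso
          have hTc : σ T = c * T := by linear_combination hT
          have hfrac : σ (T / v0) = T / v0 := by
            rw [map_div₀, hTc, ← hcv0]
            exact mul_div_mul_left T v0 hcne
          obtain ⟨μ, hμ⟩ := (hfix _).1 hfrac
          have hTμ : T = μ • v0 := by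
            rw [Algebra.smul_def, hμ, div_mul_cancel₀ T hv0]
          have hμ0 : μ ≠ 0 := by
            intro h; rw [h, zero_smul] at hTμ; exact hT0 hTμ
          set cc : Fin (d+2) → K := Fin.cons (-μ) lam with hccdef
          have hsum : ∑ i, cc i • v i = 0 := by
            rw [Fin.sum_univ_succ]
            simp only [hccdef, Fin.cons_zero, Fin.cons_succ]
            rw [← hTdef, ← hv0def, hTμ]
            rw [neg_smul, neg_add_cancel]
          have := Fintype.linearIndependent_iff.1 hv cc hsum 0
          rw [hccdef] at this
          simp only [Fin.cons_zero, neg_eq_zero] at this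
          exact hμ0 this
      have hball := ih b bdeg w hwind h0'
      intro i
      rcases Nat.eq_zero_or_pos i with h | h
      · subst h
        have : a 0 + b 0 * c = 0 := hr
        rw [hball 0] at this
        simpa using this
      · obtain ⟨i', rfl⟩ := Nat.exists_eq_add_of_lt h
        have := brec i'
        rw [hball i', hball (i'+1)] at this
        simpa using this.symm

theorem rbLe (σ : L ≃+* L) (hfix : FixHyp σ K) {d t : ℕ} (h : d + 1 ≤ t) (a : ℕ → L)
    (hd : ∀ i, d < i → a i = 0) (v : Fin t → L) (hv : LinearIndependent K v)
    (h0 : ∀ j, sev σ a d (v j) = 0) : ∀ i, a i = 0 :=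
  rb σ hfix d a hd (v ∘ Fin.castLE h) (hv.comp _ (Fin.castLE_injective h)) (fun j => h0 _)


lemma sev_coeff_zero (σ : L ≃+* L) (d : ℕ) (x : L) : sev σ (fun _ => 0) d x = 0 := by
  simp [sev]

theorem ker_bound (σ : L ≃+* L) (hfix : FixHyp σ K) [FiniteDimensional K L]
    (a : ℕ → L) (d : ℕ) (hd : ∀ i, d < i → a i = 0) (hne : ∃ i, a i ≠ 0) :
    Module.finrank K (LinearMap.ker (sevLin σ hfix a d)) ≤ d := by
  by_contra hcon
  push_neg at hcon
  set S := LinearMap.ker (sevLin σ hfix a d) with hSdef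
  have h2 : d + 1 ≤ Module.finrank K S := hcon
  let B := Module.finBasis K S
  set v : Fin (d+1) → L := fun j => ((B (Fin.castLE h2 j) : S) : L) with hvdef
  have hv : LinearIndependent K v :=
    ((B.linearIndependent.map' S.subtype (Submodule.ker_subtype S)).comp
      (Fin.castLE h2) (Fin.castLE_injective h2))
  have h0 : ∀ j, sev σ a d (v j) = 0 := fun j => (B (Fin.castLE h2 j)).2
  obtain ⟨i, hi⟩ := hne
  exact hi (rb σ hfix d a hd v hv h0 i)

theorem moore_det (σ : L ≃+* L) (hfix : FixHyp σ K) {t : ℕ} (g : Fin t → L)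
    (hg : LinearIndependent K g) :
    (Matrix.of fun i l : Fin t => (σ ^ (i : ℕ)) (g l)).det ≠ 0 := by
  rcases Nat.eq_zero_or_pos t with rfl | ht
  · simp [Matrix.det_fin_zero]
  intro hdet
  obtain ⟨cvec, hc0, hcA⟩ := Matrix.exists_vecMul_eq_zero_iff.2 hdet
  set a : ℕ → L := fun i => if h : i < t then cvec ⟨i, h⟩ else 0 with hadef
  have hd : ∀ i, t - 1 < i → a i = 0 := by
    intro i hi
    have hni : ¬ i < t := by omega
    simp only [hadef, dif_neg hni]
  have hsev : ∀ l, sev σ a (t-1) (g l) = 0 := by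
    intro l
    have hrow := congrFun hcA l
    rw [sev, show t - 1 + 1 = t from by omega, Finset.sum_range]
    have : ∀ i : Fin t, a (i : ℕ) * (σ ^ (i : ℕ)) (g l) = cvec i * (σ ^ (i : ℕ)) (g l) := by
      intro i; rw [hadef]; simp [i.isLt]
    rw [Finset.sum_congr rfl fun i _ => this i]
    simpa [Matrix.vecMul, dotProduct] using hrow
  have hall := rbLe σ hfix (by omega : t - 1 + 1 ≤ t) a hd g hg hsev
  apply hc0
  funext i
  have := hall (i : ℕ)
  rw [hadef] at this
  simpa [i.isLt] using this

theorem uniq (σ : L ≃+* L) (hfix : FixHyp σ K) {t : ℕ} (g : Fin (t+1) → L)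
    (hg : LinearIndependent K g) (p p' : ℕ → L)
    (hdeg : ∀ i, t + 1 < i → p i = 0) (hdeg' : ∀ i, t + 1 < i → p' i = 0)
    (h00 : p 0 = p' 0)
    (hkill : ∀ l, sev σ p (t+1) (g l) = 0) (hkill' : ∀ l, sev σ p' (t+1) (g l) = 0) :
    ∀ w, p w = p' w := by
  have hz : ∀ l, sev σ (fun w => p w - p' w) (t+1) (g l) = 0 := by
    intro l; rw [sev_coeff_sub, hkill l, hkill' l, sub_zero]
  have hk : ∀ l, sev σ (fun w => σ.symm (p (w+1) - p' (w+1))) t (g l) = 0 := by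
    intro l
    have hsh := sev_shift σ (fun w => p w - p' w) t (g l)
    rw [hz l, show p 0 - p' 0 = 0 by rw [h00]; ring, zero_mul, sub_zero] at hsh
    exact σ.injective (by rw [hsh, map_zero])
  have hdq : ∀ i, t < i → σ.symm (p (i+1) - p' (i+1)) = 0 := by
    intro i hi
    rw [hdeg _ (by omega), hdeg' _ (by omega), sub_zero, map_zero]
  have hall := rbLe σ hfix (le_refl (t+1))
    (fun w => σ.symm (p (w+1) - p' (w+1))) hdq g hg hk
  intro w
  cases w with
  | zero => exact h00
  | succ w' =>
      have hthis : σ.symm (p (w'+1) - p' (w'+1)) = 0 := hall w'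
      have h2 : p (w'+1) - p' (w'+1) = 0 := σ.symm.injective (by rw [hthis, map_zero])
      exact sub_eq_zero.1 h2

theorem ann (σ : L ≃+* L) (hfix : FixHyp σ K) [FiniteDimensional K L] :
    ∀ (t : ℕ) (g : Fin t → L), LinearIndependent K g →
    ∃ a : ℕ → L, a t = 1 ∧ (∀ i, t < i → a i = 0) ∧
      (∀ x : L, sev σ a t x = 0 ↔ x ∈ Submodule.span K (Set.range g)) := by
  intro t
  induction t with
  | zero =>
      intro g _
      refine ⟨fun i => if i = 0 then 1 else 0, by simp, fun i hi => if_neg (by omega), ?_⟩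
      · intro x
        have : sev σ (fun i => if i = 0 then 1 else 0) 0 x = x := by
          rw [sev, Finset.sum_range_one, pow_zero_apply]; simp
        rw [this]
        have : Set.range g = (∅ : Set L) := Set.range_eq_empty g
        rw [this, Submodule.span_empty, Submodule.mem_bot]
  | succ t ih =>
      intro g hg
      set g' : Fin t → L := g ∘ Fin.castSucc with hg'def
      have hg' : LinearIndependent K g' := hg.comp _ (Fin.castSucc_injective t)
      obtain ⟨p, hpt, hpdeg, hpker⟩ := ih g' hg'
      set z : L := sev σ p t (g (Fin.last t)) with hzdef
      have hz : z ≠ 0 := by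
        intro h0
        have hmem : g (Fin.last t) ∈ Submodule.span K (Set.range g') := (hpker _).1 h0
        have hni : g (Fin.last t) ∉ Submodule.span K (g '' (Set.range Fin.castSucc)) := by
          apply hg.notMem_span_image
          simp only [Set.mem_range, not_exists]
          intro j
          exact (Fin.castSucc_lt_last j).ne
        rw [hg'def, Set.range_comp] at hmem
        exact hni hmem
      set c : L := σ z / z with hcdef
      have hcz : c * z = σ z := div_mul_cancel₀ (σ z) hz
      set a : ℕ → L := fun w => 1 * (if w = 0 then 0 else σ (p (w - 1))) + (-c) * p w with hadef
      have heval : ∀ x, sev σ a (t+1) x = 1 * σ (sev σ p t x) + (-c) * sev σ p t x :=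
        fun x => evd σ p t hpdeg 1 (-c) x
      have hatop : a (t+1) = 1 := by
        rw [hadef]
        simp only [if_neg (Nat.succ_ne_zero t), Nat.add_sub_cancel]
        rw [hpt, hpdeg (t+1) (by omega), map_one]
        ring
      have hadeg : ∀ i, t + 1 < i → a i = 0 := by
        intro i hi
        rw [hadef]
        simp only
        rw [if_neg (by omega : ¬ i = 0), hpdeg (i-1) (by omega), hpdeg i (by omega), map_zero]
        ring
      have hker0 : ∀ y ∈ Set.range g, sev σ a (t+1) y = 0 := by
        rintro y ⟨i, rfl⟩
        induction i using Fin.lastCases with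
        | last =>
            rw [heval, ← hzdef, ← hcz]
            ring
        | cast j =>
            have : sev σ p t (g (Fin.castSucc j)) = 0 :=
              (hpker _).2 (Submodule.subset_span ⟨j, rfl⟩)
            rw [heval, this, map_zero]
            ring
      set KK := LinearMap.ker (sevLin σ hfix a (t+1)) with hKKdef
      have hle : Submodule.span K (Set.range g) ≤ KK := by
        rw [Submodule.span_le]
        rintro y hy
        exact LinearMap.mem_ker.2 (hker0 y hy)
      have hrank1 : Module.finrank K (Submodule.span K (Set.range g)) = t + 1 := by
        rw [finrank_span_eq_card hg, Fintype.card_fin]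
      have hrank2 : Module.finrank K KK ≤ t + 1 :=
        ker_bound σ hfix a (t+1) hadeg ⟨t+1, by rw [hatop]; exact one_ne_zero⟩
      have heq : Submodule.span K (Set.range g) = KK :=
        Submodule.eq_of_le_of_finrank_le hle (by rw [hrank1]; exact hrank2)
      refine ⟨a, hatop, hadeg, fun x => ?_⟩
      constructor
      · intro h
        rw [heq]
        exact LinearMap.mem_ker.2 h
      · intro h
        rw [heq] at h
        exact LinearMap.mem_ker.1 h


/-- The adjoint twisted polynomial, as a function. -/
noncomputable def adj (σ : L ≃+* L) (a : ℕ → L) (d : ℕ) (y : L) : L :=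
  ∑ i ∈ Finset.range (d + 1), (σ.symm ^ i) (a i * y)

lemma adj_zero (σ : L ≃+* L) (a : ℕ → L) (d : ℕ) : adj σ a d 0 = 0 := by
  simp [adj]

lemma adj_add (σ : L ≃+* L) (a : ℕ → L) (d : ℕ) (y y' : L) :
    adj σ a d (y + y') = adj σ a d y + adj σ a d y' := by
  simp [adj, mul_add, map_add, Finset.sum_add_distrib]

lemma adj_comp (σ : L ≃+* L) (p : ℕ → L) (t : ℕ) (hpdeg : ∀ i, t < i → p i = 0)
    (ac bc y : L) :
    adj σ (fun w => ac * (if w = 0 then 0 else σ (p (w - 1))) + bc * p w) (t+1) y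
      = adj σ p t (σ.symm (ac * y) + bc * y) := by
  rw [adj_add]
  rw [adj, adj, adj]
  have hsplit : ∀ i ∈ range (t+2),
      (σ.symm ^ i) ((ac * (if i = 0 then 0 else σ (p (i - 1))) + bc * p i) * y)
        = (σ.symm ^ i) (ac * (if i = 0 then 0 else σ (p (i - 1))) * y)
          + (σ.symm ^ i) (p i * (bc * y)) := by
    intro i _
    rw [← map_add]
    congr 1
    ring
  rw [Finset.sum_congr rfl hsplit, Finset.sum_add_distrib]
  congr 1
  · rw [Finset.sum_range_succ' (fun i => (σ.symm ^ i) (ac * (if i = 0 then 0 else σ (p (i - 1))) * y)) (t+1)]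
    simp only [if_neg (Nat.succ_ne_zero _), Nat.add_sub_cancel, if_pos rfl]
    have : ∀ w ∈ range (t+1), (σ.symm ^ (w+1)) (ac * σ (p w) * y)
        = (σ.symm ^ w) (p w * σ.symm (ac * y)) := by
      intro w _
      rw [pow_succ_apply σ.symm w]
      congr 1
      rw [map_mul, map_mul, map_mul σ.symm ac y]
      rw [σ.symm_apply_apply]
      ring
    rw [Finset.sum_congr rfl this]
    simp
  · rw [Finset.sum_range_succ, hpdeg (t+1) (by omega)]
    simp

lemma interp_eval (σ : L ≃+* L) {t : ℕ} (g : Fin (t+1) → L)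
    (hdet : (Matrix.of fun i l' : Fin (t+1) => (σ ^ (i : ℕ)) (g l')).det ≠ 0) (l i' : Fin (t+1)) :
    sev σ (fun i => if h : i < t+1 then
        (Matrix.of fun i l' : Fin (t+1) => (σ ^ (i : ℕ)) (g l'))⁻¹ l ⟨i, h⟩ else 0) t (g i')
      = if l = i' then 1 else 0 := by
  set A := Matrix.of fun i l' : Fin (t+1) => (σ ^ (i : ℕ)) (g l') with hA
  rw [sev, Finset.sum_range]
  have hterm : ∀ i : Fin (t+1),
      (if h : (i:ℕ) < t+1 then A⁻¹ l ⟨(i:ℕ), h⟩ else 0) * (σ ^ (i:ℕ)) (g i')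
        = A⁻¹ l i * A i i' := by
    intro i
    rw [dif_pos i.isLt]
    congr 1
  rw [Finset.sum_congr rfl fun i _ => hterm i]
  rw [← Matrix.mul_apply, Matrix.nonsing_inv_mul A (isUnit_iff_ne_zero.2 hdet), Matrix.one_apply]

theorem comp_lemma (σ : L ≃+* L) (hfix : FixHyp σ K) {t r : ℕ} (g : Fin (t+1) → L)
    (hg : LinearIndependent K g) (b : Fin r → L) (n : ℕ → L)
    (hn0 : n 0 = -1) (hnkill : ∀ l, sev σ n (t+1) (g l) = 0)
    (X : Matrix (Fin (t+1)) (Fin r) L)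
    (hX : ∀ (i : Fin (t+1)) (j : Fin r), (σ ^ (i:ℕ)) (b j) = ∑ l, (σ ^ (i:ℕ)) (g l) * X l j) :
    ∀ (l : Fin (t+1)) (j : Fin r), σ (X l j) - X l j
      = (Matrix.of fun i l' : Fin (t+1) => (σ ^ (i:ℕ)) (g l'))⁻¹ l 0 * sev σ n (t+1) (b j) := by
  set A := Matrix.of fun i l' : Fin (t+1) => (σ ^ (i:ℕ)) (g l') with hA
  have hdet : A.det ≠ 0 := moore_det σ hfix g hg
  intro l j
  set dv : Fin (t+1) → L := fun l => σ (X l j) - X l j with hdv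
  have hXn : ∀ i : ℕ, i < t + 1 → (σ ^ i) (b j) = ∑ l, (σ ^ i) (g l) * X l j :=
    fun i hi => hX ⟨i, hi⟩ j
  have hsh : ∀ i' : ℕ, i' < t + 1 →
      (σ ^ (i'+1)) (b j) = ∑ l, (σ ^ (i'+1)) (g l) * σ (X l j) := by
    intro i' hi'
    have h1 := congrArg σ (hXn i' hi')
    rw [map_sum] at h1
    rw [pow_succ_apply' σ i' (b j), h1]
    refine Finset.sum_congr rfl fun l _ => ?_
    rw [map_mul, pow_succ_apply' σ i' (g l)]
  have hmid : ∀ i : Fin (t+1), (i:ℕ) ≠ 0 → ∑ l', (σ ^ (i:ℕ)) (g l') * dv l' = 0 := by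
    intro i hi
    obtain ⟨i', hi'⟩ : ∃ i', (i:ℕ) = i' + 1 := ⟨(i:ℕ)-1, by omega⟩
    have hilt : i' < t + 1 := by have := i.isLt; omega
    have h2 : ∑ l', (σ ^ (i:ℕ)) (g l') * σ (X l' j) = (σ ^ (i:ℕ)) (b j) := by
      rw [hi']; exact (hsh i' hilt).symm
    have h3 := hXn (i:ℕ) i.isLt
    calc ∑ l', (σ ^ (i:ℕ)) (g l') * dv l'
        = (∑ l', (σ ^ (i:ℕ)) (g l') * σ (X l' j)) - ∑ l', (σ ^ (i:ℕ)) (g l') * X l' j := by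
          rw [← Finset.sum_sub_distrib]
          exact Finset.sum_congr rfl fun l' _ => by rw [hdv]; ring
      _ = 0 := by rw [h2, ← h3, sub_self]
  have hSd : ∀ i : ℕ, i < t + 1 → i ≠ 0 →
      ∑ l', (σ ^ i) (g l') * σ (X l' j) = ∑ l', (σ ^ i) (g l') * X l' j := by
    intro i hi hi0
    have h6 := hmid ⟨i, hi⟩ (by simpa using hi0)
    have h4 : (∑ l', (σ ^ i) (g l') * σ (X l' j)) - ∑ l', (σ ^ i) (g l') * X l' j = 0 := by
      rw [← Finset.sum_sub_distrib, ← h6]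
      exact Finset.sum_congr rfl fun l' _ => by rw [hdv]; ring
    linear_combination h4
  have hgl : ∀ l' : Fin (t+1), n (t+1) * (σ ^ (t+1)) (g l')
      = - ∑ i ∈ range (t+1), n i * (σ ^ i) (g l') := by
    intro l'
    have h7 := hnkill l'
    rw [sev, Finset.sum_range_succ] at h7
    linear_combination h7
  have e2 : n (t+1) * (σ ^ (t+1)) (b j)
      = - ∑ i ∈ range (t+1), n i * ∑ l', (σ ^ i) (g l') * σ (X l' j) := by
    rw [hsh t (by omega), Finset.mul_sum]
    have step1 : ∀ l' : Fin (t+1), n (t+1) * ((σ ^ (t+1)) (g l') * σ (X l' j))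
        = ∑ i ∈ range (t+1), -(n i * ((σ ^ i) (g l') * σ (X l' j))) := by
      intro l'
      calc n (t+1) * ((σ ^ (t+1)) (g l') * σ (X l' j))
          = (n (t+1) * (σ ^ (t+1)) (g l')) * σ (X l' j) := by ring
        _ = (- ∑ i ∈ range (t+1), n i * (σ ^ i) (g l')) * σ (X l' j) := by rw [hgl l']
        _ = ∑ i ∈ range (t+1), -(n i * ((σ ^ i) (g l') * σ (X l' j))) := by
            rw [neg_mul, Finset.sum_mul, ← Finset.sum_neg_distrib]
            exact Finset.sum_congr rfl fun i _ => by ring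
    calc ∑ l', n (t+1) * ((σ ^ (t+1)) (g l') * σ (X l' j))
        = ∑ l', ∑ i ∈ range (t+1), -(n i * ((σ ^ i) (g l') * σ (X l' j))) :=
          Finset.sum_congr rfl fun l' _ => step1 l'
      _ = ∑ i ∈ range (t+1), ∑ l', -(n i * ((σ ^ i) (g l') * σ (X l' j))) := Finset.sum_comm
      _ = - ∑ i ∈ range (t+1), n i * ∑ l', (σ ^ i) (g l') * σ (X l' j) := by
          rw [← Finset.sum_neg_distrib]
          refine Finset.sum_congr rfl fun i _ => ?_
          rw [Finset.mul_sum, ← Finset.sum_neg_distrib]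
  have hrow0 : ∑ l', g l' * dv l' = sev σ n (t+1) (b j) := by
    have e0 : sev σ n (t+1) (b j)
        = ∑ i ∈ range (t+1), n i * (σ ^ i) (b j) + n (t+1) * (σ ^ (t+1)) (b j) := by
      rw [sev]; exact Finset.sum_range_succ _ (t+1)
    have e1 : ∑ i ∈ range (t+1), n i * (σ ^ i) (b j)
        = ∑ i ∈ range (t+1), n i * ∑ l', (σ ^ i) (g l') * X l' j := by
      refine Finset.sum_congr rfl fun i hi => ?_
      rw [hXn i (Finset.mem_range.1 hi)]
    rw [e0, e1, e2]
    have e3 : ∑ i ∈ range (t+1), n i * ∑ l', (σ ^ i) (g l') * X l' j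
          + (- ∑ i ∈ range (t+1), n i * ∑ l', (σ ^ i) (g l') * σ (X l' j))
        = ∑ i ∈ range (t+1), (n i * ∑ l', (σ ^ i) (g l') * X l' j
            - n i * ∑ l', (σ ^ i) (g l') * σ (X l' j)) := by
      rw [Finset.sum_sub_distrib]; ring
    rw [e3]
    have e4 : ∑ i ∈ range (t+1), (n i * ∑ l', (σ ^ i) (g l') * X l' j
          - n i * ∑ l', (σ ^ i) (g l') * σ (X l' j))
        = n 0 * ∑ l', (σ ^ 0) (g l') * X l' j - n 0 * ∑ l', (σ ^ 0) (g l') * σ (X l' j) := by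
      apply Finset.sum_eq_single_of_mem 0 (Finset.mem_range.2 (by omega))
      intro i hi hi0
      rw [hSd i (Finset.mem_range.1 hi) hi0]
      ring
    rw [e4, hn0]
    have e5 : ∀ l' : Fin (t+1), g l' * dv l'
        = (σ ^ 0) (g l') * σ (X l' j) - (σ ^ 0) (g l') * X l' j := by
      intro l'; rw [pow_zero_apply, hdv]; ring
    rw [Finset.sum_congr rfl fun l' _ => e5 l', Finset.sum_sub_distrib]
    ring
  have hmv : A.mulVec dv = fun i : Fin (t+1) => if i = 0 then sev σ n (t+1) (b j) else 0 := by
    funext i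
    show ∑ l', A i l' * dv l' = _
    by_cases hi : i = 0
    · subst hi
      rw [if_pos rfl]
      have e6 : ∀ l' : Fin (t+1), A (0 : Fin (t+1)) l' * dv l' = g l' * dv l' := by
        intro l'
        have : A (0 : Fin (t+1)) l' = g l' := by
          show (σ ^ (((0 : Fin (t+1))) : ℕ)) (g l') = g l'
          rw [Fin.val_zero, pow_zero_apply]
        rw [this]
      rw [Finset.sum_congr rfl fun l' _ => e6 l']
      exact hrow0
    · rw [if_neg hi]
      refine hmid i fun hval => hi (Fin.ext ?_)
      simp [hval]
  have hdvv : dv = A⁻¹.mulVec (A.mulVec dv) := by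
    rw [Matrix.mulVec_mulVec, Matrix.nonsing_inv_mul A (isUnit_iff_ne_zero.2 hdet), Matrix.one_mulVec]
  have hfinal : dv l = A⁻¹ l 0 * sev σ n (t+1) (b j) := by
    conv_lhs => rw [hdvv, hmv]
    show ∑ i, A⁻¹ l i * (if i = 0 then sev σ n (t+1) (b j) else 0) = _
    simp [mul_ite, mul_zero]
  exact hfinal


theorem claimB (σ : L ≃+* L) (hfix : FixHyp σ K) [FiniteDimensional K L] {t : ℕ}
    (g : Fin (t+1) → L) (hg : LinearIndependent K g) (n : ℕ → L)
    (hn0 : n 0 = -1) (hndeg : ∀ i, t + 1 < i → n i = 0)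
    (hnkill : ∀ l, sev σ n (t+1) (g l) = 0) :
    ∀ l, adj σ n (t+1) ((Matrix.of fun i l' : Fin (t+1) => (σ ^ (i:ℕ)) (g l'))⁻¹ l 0) = 0 := by
  set A := Matrix.of fun i l' : Fin (t+1) => (σ ^ (i:ℕ)) (g l') with hA
  have hdet : A.det ≠ 0 := moore_det σ hfix g hg
  intro l
  set g' : Fin t → L := g ∘ l.succAbove with hg'
  have hg'i : LinearIndependent K g' := hg.comp _ (Fin.succAbove_right_injective)
  obtain ⟨p, hpt, hpdeg, hpker⟩ := ann σ hfix t g' hg'i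
  set z := sev σ p t (g l) with hz
  have hzne : z ≠ 0 := by
    intro h0
    have hmem := (hpker _).1 h0
    have hni : g l ∉ Submodule.span K (g '' (Set.range l.succAbove)) := by
      apply hg.notMem_span_image
      simp only [Set.mem_range, not_exists]
      exact fun j => Fin.succAbove_ne l j
    rw [hg', Set.range_comp] at hmem
    exact hni hmem
  have hp0 : p 0 ≠ 0 := by
    rcases Nat.eq_zero_or_pos t with rfl | ht
    · rw [hpt]; exact one_ne_zero
    · intro h0
      obtain ⟨t', rfl⟩ : ∃ t', t = t' + 1 := ⟨t-1, by omega⟩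
      have hall := uniq σ hfix g' hg'i p (fun _ => 0) hpdeg (fun _ _ => rfl) h0
        (fun l' => (hpker _).2 (Submodule.subset_span ⟨l', rfl⟩))
        (fun l' => sev_coeff_zero σ _ _)
      exact zero_ne_one ((hall _).symm.trans hpt)
  have hσz : σ z ≠ 0 := by simpa using hzne
  set ac := z / (p 0 * σ z) with hac
  set bc := -(p 0)⁻¹ with hbc
  have hackey : ac ≠ 0 := by
    rw [hac]; exact div_ne_zero hzne (mul_ne_zero hp0 hσz)
  set q : ℕ → L := fun w => ac * (if w = 0 then 0 else σ (p (w-1))) + bc * p w with hq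
  have hq0 : q 0 = -1 := by
    rw [hq]
    simp only [if_pos rfl, if_true, mul_zero, zero_add, hbc]
    field_simp
  have hqdeg : ∀ i, t + 1 < i → q i = 0 := by
    intro i hi
    rw [hq]
    simp only
    rw [if_neg (by omega : ¬ i = 0), hpdeg (i-1) (by omega), hpdeg i (by omega), map_zero]
    ring
  have hqkill : ∀ lx, sev σ q (t+1) (g lx) = 0 := by
    intro lx
    have heval := evd σ p t hpdeg ac bc (g lx)
    rw [hq, heval]
    by_cases hlx : lx = l
    · subst hlx
      rw [← hz, hac, hbc]
      field_simp
      ring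
    · obtain ⟨j, rfl⟩ := Fin.exists_succAbove_eq hlx
      have : sev σ p t (g (l.succAbove j)) = 0 :=
        (hpker _).2 (Submodule.subset_span ⟨j, rfl⟩)
      rw [this, map_zero]
      ring
  have hnq : ∀ w, n w = q w := uniq σ hfix g hg n q hndeg hqdeg (by rw [hq0, hn0]) hnkill hqkill
  have hnq' : n = q := funext hnq
  -- interpolation: value of A⁻¹ l 0
  have hfg : ∀ w : ℕ,
      (if h : w < t+1 then A⁻¹ l ⟨w, h⟩ else 0) = z⁻¹ * p w := by
    have hkill2 : ∀ i', sev σ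
        (fun w => (if h : w < t+1 then A⁻¹ l ⟨w, h⟩ else 0) - z⁻¹ * p w) t (g i') = 0 := by
      intro i'
      rw [sev_coeff_sub, interp_eval σ g hdet l i', sev_coeff_mul]
      by_cases hl' : l = i'
      · subst hl'
        rw [if_pos rfl, ← hz, inv_mul_cancel₀ hzne, sub_self]
      · obtain ⟨j, rfl⟩ := Fin.exists_succAbove_eq (fun h => hl' h.symm : i' ≠ l)
        have : sev σ p t (g (l.succAbove j)) = 0 :=
          (hpker _).2 (Submodule.subset_span ⟨j, rfl⟩)
        rw [this, if_neg hl', mul_zero, sub_self]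
    have hdeg2 : ∀ i, t < i →
        (if h : i < t+1 then A⁻¹ l ⟨i, h⟩ else 0) - z⁻¹ * p i = 0 := by
      intro i hi
      rw [dif_neg (by omega : ¬ i < t+1), hpdeg i hi]
      ring
    have hall := rbLe σ hfix (le_refl (t+1))
      (fun w => (if h : w < t+1 then A⁻¹ l ⟨w, h⟩ else 0) - z⁻¹ * p w) hdeg2 g hg hkill2
    intro w
    exact sub_eq_zero.1 (hall w)
  have hvl : A⁻¹ l 0 = z⁻¹ * p 0 := by
    have := hfg 0
    rw [dif_pos (by omega : (0:ℕ) < t+1)] at this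
    convert this using 2
    simp [Fin.ext_iff]
  rw [hvl, hnq', hq]
  rw [adj_comp σ p t hpdeg ac bc _]
  have harg : σ.symm (ac * (z⁻¹ * p 0)) + bc * (z⁻¹ * p 0) = 0 := by
    have h1 : ac * (z⁻¹ * p 0) = (σ z)⁻¹ := by
      rw [hac]
      field_simp
    rw [h1, map_inv₀, σ.symm_apply_apply, hbc]
    field_simp
    ring
  rw [harg, adj_zero]

theorem claimC (σ : L ≃+* L) (hfix : FixHyp σ K) {t : ℕ}
    (g : Fin (t+1) → L) (hg : LinearIndependent K g) :
    LinearIndependent K (fun l : Fin (t+1) =>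
      (Matrix.of fun i l' : Fin (t+1) => (σ ^ (i:ℕ)) (g l'))⁻¹ l 0) := by
  set A := Matrix.of fun i l' : Fin (t+1) => (σ ^ (i:ℕ)) (g l') with hA
  have hdet : A.det ≠ 0 := moore_det σ hfix g hg
  rw [Fintype.linearIndependent_iff]
  intro μ hμ
  set P : ℕ → L := fun w => ∑ l, algebraMap K L (μ l) * (if h : w < t+1 then A⁻¹ l ⟨w, h⟩ else 0)
    with hP
  have hPdeg : ∀ i, t < i → P i = 0 := by
    intro i hi
    simp only [hP]
    simp only [dif_neg (by omega : ¬ i < t+1), mul_zero]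
    exact Finset.sum_const_zero
  have hP0 : P 0 = 0 := by
    simp only [hP]
    have : ∀ l : Fin (t+1), algebraMap K L (μ l) * (if h : (0:ℕ) < t+1 then A⁻¹ l ⟨0, h⟩ else 0)
        = μ l • (A⁻¹ l 0) := by
      intro l
      rw [dif_pos (by omega : (0:ℕ) < t+1), Algebra.smul_def]
      congr 2
    rw [Finset.sum_congr rfl fun l _ => this l]
    exact hμ
  have hPeval : ∀ i', sev σ P t (g i') = algebraMap K L (μ i') := by
    intro i'
    rw [hP, sev_coeff_sum]
    have : ∀ l : Fin (t+1),
        sev σ (fun w => algebraMap K L (μ l) * (if h : w < t+1 then A⁻¹ l ⟨w, h⟩ else 0)) t (g i')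
          = algebraMap K L (μ l) * (if l = i' then 1 else 0) := by
      intro l
      rw [sev_coeff_mul, interp_eval σ g hdet l i']
    rw [Finset.sum_congr rfl fun l _ => this l]
    simp [mul_ite, mul_zero]
  have hPeval' : ∀ i', sev σ (fun w => σ.symm (P (w+1))) t (g i') = algebraMap K L (μ i') := by
    intro i'
    have hsh := sev_shift σ P t (g i')
    have hstep : sev σ P (t+1) (g i') = sev σ P t (g i') := by
      rw [sev, sev, Finset.sum_range_succ, hPdeg (t+1) (by omega), zero_mul, add_zero]
    rw [hstep, hPeval i', hP0, zero_mul, sub_zero] at hsh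
    apply σ.injective
    rw [hsh, hfix.alg]
  have hkill : ∀ i', sev σ (fun w => P w - σ.symm (P (w+1))) t (g i') = 0 := by
    intro i'
    rw [sev_coeff_sub, hPeval i', hPeval' i', sub_self]
  have hdeg : ∀ i, t < i → P i - σ.symm (P (i+1)) = 0 := by
    intro i hi
    rw [hPdeg i hi, hPdeg (i+1) (by omega), map_zero, sub_zero]
  have hall := rbLe σ hfix (le_refl (t+1)) (fun w => P w - σ.symm (P (w+1))) hdeg g hg hkill
  have hPP : ∀ w, P w = σ.symm (P (w+1)) := fun w => sub_eq_zero.1 (hall w)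
  have hiter : ∀ (i w : ℕ), P w = (σ.symm ^ i) (P (w + i)) := by
    intro i
    induction i with
    | zero => intro w; rfl
    | succ i ih =>
        intro w
        rw [ih w, show w + (i+1) = (w + i) + 1 from by omega]
        rw [pow_succ_apply σ.symm i]
        rw [← hPP (w + i)]
  have hPzero : ∀ w, P w = 0 := by
    intro w
    rw [hiter (t+1) w, hPdeg (w + (t+1)) (by omega), map_zero]
  intro i'
  have : algebraMap K L (μ i') = 0 := by
    rw [← hPeval i']
    have : P = fun _ => (0:L) := funext hPzero
    rw [this]
    exact sev_coeff_zero σ t (g i')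
  exact (algebraMap K L).injective (by rw [this, map_zero])


section Concrete

variable {K L : Type*} [Field K] [Field L] [Algebra K L] [Fintype K] [Fintype L]
variable {q m : ℕ}

lemma cardL (hq : Fintype.card K = q) (hm : Module.finrank K L = m) :
    Fintype.card L = q ^ m := by
  rw [← hq, ← hm]
  exact Module.card_eq_pow_finrank

lemma pow_qm (hq : Fintype.card K = q) (hm : Module.finrank K L = m) (x : L) :
    x ^ q ^ m = x := by
  rw [← cardL hq hm]
  exact FiniteField.pow_card x

lemma exists_sigma (hq : Fintype.card K = q) (s : ℕ) :
    ∃ σ : L ≃+* L, ∀ x : L, σ x = x ^ q ^ s := by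
  set p := ringChar K with hpdef
  haveI : CharP K p := ringChar.charP K
  obtain ⟨n, hp, hcard⟩ := FiniteField.card K p
  haveI : Fact p.Prime := ⟨hp⟩
  haveI : CharP L p := charP_of_injective_algebraMap (algebraMap K L).injective p
  haveI : ExpChar L p := ExpChar.prime hp
  set F : L →+* L := iterateFrobenius L p ((n : ℕ) * s) with hF
  have hFx : ∀ x : L, F x = x ^ q ^ s := by
    intro x
    rw [hF, iterateFrobenius_def]
    congr 1
    rw [← hq, hcard, pow_mul]
  have hFbij : Function.Bijective F :=
    (Finite.injective_iff_bijective).1 F.injective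
  exact ⟨RingEquiv.ofBijective F hFbij, hFx⟩

lemma fixq (hq : Fintype.card K = q) :
    ∀ x : L, x ^ q = x ↔ x ∈ Set.range (algebraMap K L) := by
  classical
  have h1q : 1 < q := by rw [← hq]; exact Fintype.one_lt_card
  intro x
  constructor
  · intro hx
    set P : Polynomial L := Polynomial.X ^ q - Polynomial.X with hP
    have hPne : P ≠ 0 := FiniteField.X_pow_card_sub_X_ne_zero L h1q
    have hPdeg : P.natDegree = q := FiniteField.X_pow_card_sub_X_natDegree_eq L h1q
    set T : Finset L := Finset.univ.image (fun c : K => algebraMap K L c) with hT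
    have hTcard : T.card = q := by
      rw [hT, Finset.card_image_of_injective _ (algebraMap K L).injective,
        Finset.card_univ, hq]
    have hroot : ∀ y ∈ T, P.eval y = 0 := by
      intro y hy
      obtain ⟨c, _, rfl⟩ := Finset.mem_image.1 hy
      rw [hP]
      simp only [Polynomial.eval_sub, Polynomial.eval_pow, Polynomial.eval_X]
      rw [← map_pow]
      rw [show c ^ q = c from by rw [← hq]; exact FiniteField.pow_card c]
      ring
    have hsub : T ⊆ P.roots.toFinset := by
      intro y hy
      rw [Multiset.mem_toFinset, Polynomial.mem_roots hPne]
      exact hroot y hy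
    have hcard2 : P.roots.toFinset.card ≤ q :=
      le_trans (Multiset.toFinset_card_le _) (le_trans (Polynomial.card_roots' P) hPdeg.le)
    have heqT : T = P.roots.toFinset :=
      Finset.eq_of_subset_of_card_le hsub (by rw [hTcard]; exact hcard2)
    have hxmem : x ∈ P.roots.toFinset := by
      rw [Multiset.mem_toFinset, Polynomial.mem_roots hPne]
      show P.eval x = 0
      rw [hP]
      simp only [Polynomial.eval_sub, Polynomial.eval_pow, Polynomial.eval_X]
      rw [hx]; ring
    rw [← heqT] at hxmem
    obtain ⟨c, _, hc⟩ := Finset.mem_image.1 hxmem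
    exact ⟨c, hc⟩
  · rintro ⟨c, rfl⟩
    rw [← map_pow]
    congr 1
    rw [← hq]
    exact FiniteField.pow_card c

lemma fix_iff (hq : Fintype.card K = q) (hm : Module.finrank K L = m)
    {s : ℕ} (hsm : Nat.Coprime s m) (hm1 : 1 < m) :
    ∀ x : L, x ^ q ^ s = x ↔ x ∈ Set.range (algebraMap K L) := by
  intro x
  constructor
  · intro hx
    have hiter : ∀ t : ℕ, x ^ q ^ (s * t) = x := by
      intro t; induction t with
      | zero => simp
      | succ t ih =>
          have he : q ^ (s * (t+1)) = q ^ (s*t) * q ^ s := by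
            rw [Nat.mul_succ, pow_add]
          rw [he, pow_mul, ih]
          exact hx
    have hmod : ∀ u : ℕ, x ^ q ^ u = x ^ q ^ (u % m) := by
      intro u
      induction u using Nat.strong_induction_on with
      | _ u ih =>
        rcases lt_or_ge u m with h | h
        · rw [Nat.mod_eq_of_lt h]
        · have h2 : q ^ u = q ^ m * q ^ (u - m) := by
            rw [← pow_add]; congr 1; omega
          rw [h2, pow_mul, pow_qm hq hm, ih (u - m) (by omega), Nat.mod_eq_sub_mod h]
    obtain ⟨t, -, ht⟩ := Nat.exists_mul_mod_eq_one_of_coprime hsm hm1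
    have hx1 : x ^ q = x := by
      have h5 : x ^ q ^ ((s*t) % m) = x := by rw [← hmod (s*t)]; exact hiter t
      rw [ht, pow_one] at h5
      exact h5
    exact (fixq hq x).1 hx1
  · rintro ⟨c, rfl⟩
    rw [← map_pow]
    congr 1
    rw [← hq]
    exact FiniteField.pow_card_pow s c

lemma pow_sigma_eq {s : ℕ} (σ : L ≃+* L) (hσ : ∀ x : L, σ x = x ^ q ^ s) :
    ∀ (i : ℕ) (x : L), (σ ^ i) x = x ^ q ^ (s * i) := by
  intro i
  induction i with
  | zero => intro x; rw [pow_zero_apply]; simp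
  | succ i ih =>
      intro x
      rw [pow_succ_apply, ih (σ x), hσ, ← pow_mul, ← pow_add]
      congr 1
      ring

lemma tr_tau (τ : L ≃+* L) (hτ : ∀ x : L, τ x = x ^ q ^ 1) (x : L) :
    fieldTrace q m x = ∑ i ∈ Finset.range m, (τ ^ i) x := by
  rw [fieldTrace]
  refine Finset.sum_congr rfl fun i _ => ?_
  rw [pow_sigma_eq τ hτ i x, one_mul]

lemma tr_add' (τ : L ≃+* L) (hτ : ∀ x : L, τ x = x ^ q ^ 1) (x y : L) :
    fieldTrace q m (x + y) = fieldTrace q m x + fieldTrace q m y := by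
  rw [tr_tau τ hτ, tr_tau τ hτ, tr_tau τ hτ, ← Finset.sum_add_distrib]
  exact Finset.sum_congr rfl fun i _ => map_add _ _ _

lemma tr_sum' (τ : L ≃+* L) (hτ : ∀ x : L, τ x = x ^ q ^ 1) {ι : Type*} (sfin : Finset ι)
    (f : ι → L) : fieldTrace q m (∑ i ∈ sfin, f i) = ∑ i ∈ sfin, fieldTrace q m (f i) := by
  simp only [tr_tau τ hτ]
  rw [Finset.sum_comm]
  exact Finset.sum_congr rfl fun i _ => map_sum _ _ _

lemma tr_frob (hq : Fintype.card K = q) (hm : Module.finrank K L = m) (x : L) :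
    fieldTrace q m (x ^ q) = fieldTrace q m x := by
  have h1 : ∀ i : ℕ, (x ^ q) ^ q ^ i = x ^ q ^ (i + 1) := by
    intro i
    rw [← pow_mul, ← pow_succ']
  rw [fieldTrace, Finset.sum_congr rfl fun i _ => h1 i]
  have h2 := Finset.sum_range_succ' (fun i => x ^ q ^ i) m
  have h3 := Finset.sum_range_succ (fun i => x ^ q ^ i) m
  rw [fieldTrace]
  have h4 : x ^ q ^ m = x ^ q ^ 0 := by rw [pow_qm hq hm x]; simp
  linear_combination h3 - h2 + h4
end Concrete


section Concrete2

variable {K L : Type*} [Field K] [Field L] [Algebra K L] [Fintype K] [Fintype L]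
variable {q m : ℕ}

lemma tr_pow_q (hq : Fintype.card K = q) (hm : Module.finrank K L = m) (t : ℕ) (x : L) :
    fieldTrace q m (x ^ q ^ t) = fieldTrace q m x := by
  induction t with
  | zero => simp
  | succ t ih =>
      have h1 : x ^ q ^ (t+1) = (x ^ q ^ t) ^ q := by rw [← pow_mul, pow_succ]
      rw [h1, tr_frob hq hm, ih]

lemma tr_symm (hq : Fintype.card K = q) (hm : Module.finrank K L = m) {s : ℕ}
    (σ : L ≃+* L) (hσ : ∀ x : L, σ x = x ^ q ^ s) (x : L) :
    fieldTrace q m (σ.symm x) = fieldTrace q m x := by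
  calc fieldTrace q m (σ.symm x) = fieldTrace q m ((σ.symm x) ^ q ^ s) := (tr_pow_q hq hm s _).symm
    _ = fieldTrace q m x := by rw [← hσ, σ.apply_symm_apply]

lemma tr_symm_pow (hq : Fintype.card K = q) (hm : Module.finrank K L = m) {s : ℕ}
    (σ : L ≃+* L) (hσ : ∀ x : L, σ x = x ^ q ^ s) (i : ℕ) :
    ∀ x : L, fieldTrace q m ((σ.symm ^ i) x) = fieldTrace q m x := by
  induction i with
  | zero => intro x; rfl
  | succ i ih =>
      intro x
      rw [pow_succ_apply σ.symm i x, ih (σ.symm x), tr_symm hq hm σ hσ]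

lemma tr_smul (hq : Fintype.card K = q) (c : K) (x : L) :
    fieldTrace q m (algebraMap K L c * x) = algebraMap K L c * fieldTrace q m x := by
  rw [fieldTrace, fieldTrace, Finset.mul_sum]
  refine Finset.sum_congr rfl fun i _ => ?_
  rw [mul_pow, ← map_pow,
    show c ^ q ^ i = c from by rw [← hq]; exact FiniteField.pow_card_pow i c]

lemma tr_zero (hq : Fintype.card K = q) : fieldTrace q m (0 : L) = 0 := by
  have hq0 : q ≠ 0 := by
    rw [← hq]; exact Fintype.card_ne_zero
  rw [fieldTrace]
  apply Finset.sum_eq_zero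
  intro i _
  exact zero_pow (pow_ne_zero i hq0)

lemma tr_adj (hq : Fintype.card K = q) (hm : Module.finrank K L = m) {s : ℕ}
    (σ : L ≃+* L) (hσ : ∀ x : L, σ x = x ^ q ^ s) (a : ℕ → L) (d : ℕ) (y x : L) :
    fieldTrace q m (y * sev σ a d x) = fieldTrace q m (adj σ a d y * x) := by
  obtain ⟨τ, hτ⟩ := exists_sigma (L := L) hq 1
  rw [sev, Finset.mul_sum, tr_sum' τ hτ, adj, Finset.sum_mul, tr_sum' τ hτ]
  refine Finset.sum_congr rfl fun i _ => ?_
  have h1 : (σ.symm ^ i) (y * (a i * (σ ^ i) x)) = (σ.symm ^ i) (a i * y) * x := by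
    calc (σ.symm ^ i) (y * (a i * (σ ^ i) x))
        = (σ.symm ^ i) y * ((σ.symm ^ i) (a i) * (σ.symm ^ i) ((σ ^ i) x)) := by
          rw [map_mul, map_mul]
      _ = (σ.symm ^ i) y * ((σ.symm ^ i) (a i) * x) := by rw [symm_pow_apply]
      _ = ((σ.symm ^ i) (a i) * (σ.symm ^ i) y) * x := by ring
      _ = (σ.symm ^ i) (a i * y) * x := by rw [← map_mul]
  rw [← h1]
  exact (tr_symm_pow hq hm σ hσ i _).symm

lemma rkq_iff {t : ℕ} (v : Fin t → L) : rkq K v = t ↔ LinearIndependent K v := by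
  constructor
  · intro h
    apply linearIndependent_iff_card_eq_finrank_span.2
    rw [Fintype.card_fin]
    exact h.symm
  · intro h
    rw [rkq, finrank_span_eq_card h, Fintype.card_fin]

lemma CX_eq_spanF {t r : ℕ} (X : Matrix (Fin t) (Fin r) L) :
    CX X = Submodule.span L (Set.range fun i : Fin t =>
      fun j : Fin (t+r) => Matrix.fromCols (1 : Matrix (Fin t) (Fin t) L) X i
        (finSumFinEquiv.symm j)) := by
  rw [CX]
  congr 1

theorem span_eq_gab (σ : L ≃+* L) (hfix : FixHyp σ K) {t r : ℕ}
    (g : Fin (t+1) → L) (hg : LinearIndependent K g) (b : Fin r → L)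
    (X : Matrix (Fin (t+1)) (Fin r) L)
    (hX : ∀ (i : Fin (t+1)) (j : Fin r),
      (σ ^ (i:ℕ)) (b j) = ∑ l, (σ ^ (i:ℕ)) (g l) * X l j) :
    CX X = Submodule.span L (Set.range fun i : Fin (t+1) => fun j : Fin (t+1+r) =>
      (σ ^ (i:ℕ)) (Sum.elim g b (finSumFinEquiv.symm j))) := by
  set A := Matrix.of fun i l' : Fin (t+1) => (σ ^ (i:ℕ)) (g l') with hA
  have hdet : A.det ≠ 0 := moore_det σ hfix g hg
  set F : Fin (t+1) → (Fin (t+1+r) → L) := fun i j =>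
    Matrix.fromCols (1 : Matrix (Fin (t+1)) (Fin (t+1)) L) X i (finSumFinEquiv.symm j) with hF
  set W : Fin (t+1) → (Fin (t+1+r) → L) := fun i j =>
    (σ ^ (i:ℕ)) (Sum.elim g b (finSumFinEquiv.symm j)) with hW
  have hB : ∀ (tt : Fin (t+1)) (jr : Fin r),
      (σ ^ (tt:ℕ)) (b jr) = (A * X) tt jr := by
    intro tt jr
    rw [Matrix.mul_apply]
    exact hX tt jr
  have hFW : ∀ i, F i = ∑ tt, A⁻¹ i tt • W tt := by
    intro i
    funext j
    rw [Finset.sum_apply]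
    simp only [Pi.smul_apply, smul_eq_mul]
    rcases hj : finSumFinEquiv.symm j with l | jr
    · have hFij : F i j = (1 : Matrix (Fin (t+1)) (Fin (t+1)) L) i l := by
        rw [hF]; simp only; rw [hj, Matrix.fromCols_apply_inl]
      have hWj : ∀ tt, W tt j = A tt l := by
        intro tt; rw [hW]; simp only; rw [hj, Sum.elim_inl]; rfl
      rw [hFij, Finset.sum_congr rfl fun tt _ => by rw [hWj tt]]
      rw [← Matrix.mul_apply, Matrix.nonsing_inv_mul A (isUnit_iff_ne_zero.2 hdet)]
    · have hFij : F i j = X i jr := by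
        rw [hF]; simp only; rw [hj, Matrix.fromCols_apply_inr]
      have hWj : ∀ tt, W tt j = (A * X) tt jr := by
        intro tt; rw [hW]; simp only; rw [hj, Sum.elim_inr]; exact hB tt jr
      rw [hFij, Finset.sum_congr rfl fun tt _ => by rw [hWj tt]]
      rw [← Matrix.mul_apply, ← Matrix.mul_assoc,
        Matrix.nonsing_inv_mul A (isUnit_iff_ne_zero.2 hdet), Matrix.one_mul]
  have hWF : ∀ tt, W tt = ∑ i, A tt i • F i := by
    intro tt
    funext j
    rw [Finset.sum_apply]
    simp only [Pi.smul_apply, smul_eq_mul]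
    rcases hj : finSumFinEquiv.symm j with l | jr
    · have hWj : W tt j = A tt l := by
        rw [hW]; simp only; rw [hj, Sum.elim_inl]; rfl
      have hFij : ∀ i, F i j = (1 : Matrix (Fin (t+1)) (Fin (t+1)) L) i l := by
        intro i; rw [hF]; simp only; rw [hj, Matrix.fromCols_apply_inl]
      rw [hWj, Finset.sum_congr rfl fun i _ => by rw [hFij i]]
      rw [← Matrix.mul_apply, Matrix.mul_one]
    · have hWj : W tt j = (A * X) tt jr := by
        rw [hW]; simp only; rw [hj, Sum.elim_inr]; exact hB tt jr
      have hFij : ∀ i, F i j = X i jr := by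
        intro i; rw [hF]; simp only; rw [hj, Matrix.fromCols_apply_inr]
      rw [hWj, Finset.sum_congr rfl fun i _ => by rw [hFij i]]
      rw [← Matrix.mul_apply]
  rw [CX_eq_spanF]
  apply le_antisymm
  · rw [Submodule.span_le]
    rintro _ ⟨i, rfl⟩
    have hmem : F i ∈ Submodule.span L (Set.range W) := by
      rw [hFW i]
      exact Submodule.sum_mem _ fun tt _ =>
        Submodule.smul_mem _ _ (Submodule.subset_span ⟨tt, rfl⟩)
    exact hmem
  · rw [Submodule.span_le]
    rintro _ ⟨tt, rfl⟩
    have hmem : W tt ∈ Submodule.span L (Set.range F) := by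
      rw [hWF tt]
      exact Submodule.sum_mem _ fun i _ =>
        Submodule.smul_mem _ _ (Submodule.subset_span ⟨i, rfl⟩)
    exact hmem

end Concrete2


section Main

variable {K L : Type*} [Field K] [Field L] [Algebra K L] [Fintype K] [Fintype L]
variable {q m : ℕ}

theorem forward {s : ℕ} (hq : Fintype.card K = q) (hm : Module.finrank K L = m)
    {t r : ℕ}
    (σ : L ≃+* L) (hσ : ∀ x : L, σ x = x ^ q ^ s) (hfix : FixHyp σ K)
    (X : Matrix (Fin (t+1)) (Fin r) L)
    (hGab : IsGabidulin K q s (t+1) (CX X)) :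
    ∃ (α : Fin (t+1) → L) (β : Fin r → L),
      rkq K α = t+1 ∧ rkq K β = r ∧
      (∀ x ∈ Submodule.span K (Set.range β), ∀ y ∈ Submodule.span K (Set.range α),
        fieldTrace q m (y * x) = 0) ∧
      PhiS q s X = Matrix.vecMulVec α β := by
  haveI : FiniteDimensional K L := Module.Finite.of_finite
  obtain ⟨g, hgrk, hspan⟩ := hGab
  have hgind : LinearIndependent K g := (rkq_iff g).1 hgrk
  have hWform : (fun i : Fin (t+1) => fun j => g j ^ q ^ (s * (i:ℕ)))
      = fun i : Fin (t+1) => fun j : Fin (t+1+r) => (σ ^ (i:ℕ)) (g j) := by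
    funext i j
    rw [pow_sigma_eq σ hσ]
  rw [hWform] at hspan
  set gl : Fin (t+1) → L := fun l => g (finSumFinEquiv (Sum.inl l)) with hgl
  set bb : Fin r → L := fun j => g (finSumFinEquiv (Sum.inr j)) with hbb
  have hglind : LinearIndependent K gl :=
    hgind.comp _ (fun a b hab => Sum.inl_injective (finSumFinEquiv.injective hab))
  set A := Matrix.of fun i l' : Fin (t+1) => (σ ^ (i:ℕ)) (gl l') with hA
  have hdet : A.det ≠ 0 := moore_det σ hfix gl hglind
  -- each row of (I | X) lies in the span of the Moore rows
  have hmem : ∀ i : Fin (t+1),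
      (fun j : Fin (t+1+r) => Matrix.fromCols (1 : Matrix (Fin (t+1)) (Fin (t+1)) L) X i
        (finSumFinEquiv.symm j)) ∈
      Submodule.span L (Set.range fun i : Fin (t+1) =>
        fun j : Fin (t+1+r) => (σ ^ (i:ℕ)) (g j)) := by
    intro i
    rw [← hspan, CX_eq_spanF]
    exact Submodule.subset_span ⟨i, rfl⟩
  choose T hT using fun i => (Submodule.mem_span_range_iff_exists_fun L).1 (hmem i)
  set Tm : Matrix (Fin (t+1)) (Fin (t+1)) L := Matrix.of (fun i tt => T i tt) with hTm
  have hTA : Tm * A = 1 := by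
    ext i l
    have h1 := congrFun (hT i) (finSumFinEquiv (Sum.inl l))
    rw [Finset.sum_apply] at h1
    simp only [Pi.smul_apply, smul_eq_mul, Equiv.symm_apply_apply,
      Matrix.fromCols_apply_inl] at h1
    rw [Matrix.mul_apply]
    exact h1
  have hAinv : A⁻¹ = Tm := Matrix.inv_eq_left_inv hTA
  have hTX : ∀ (i : Fin (t+1)) (jr : Fin r), ∑ tt, T i tt * (σ ^ (tt:ℕ)) (bb jr) = X i jr := by
    intro i jr
    have h1 := congrFun (hT i) (finSumFinEquiv (Sum.inr jr))
    rw [Finset.sum_apply] at h1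
    simp only [Pi.smul_apply, smul_eq_mul, Equiv.symm_apply_apply,
      Matrix.fromCols_apply_inr] at h1
    exact h1
  set B := Matrix.of (fun (i : Fin (t+1)) (jr : Fin r) => (σ ^ (i:ℕ)) (bb jr)) with hB
  have hXAB : X = A⁻¹ * B := by
    ext i jr
    rw [hAinv, Matrix.mul_apply]
    exact (hTX i jr).symm
  have hX' : ∀ (i : Fin (t+1)) (j : Fin r),
      (σ ^ (i:ℕ)) (bb j) = ∑ l, (σ ^ (i:ℕ)) (gl l) * X l j := by
    intro i j
    have h2 : (A * X) i j = B i j := by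
      rw [hXAB, ← Matrix.mul_assoc,
        Matrix.mul_nonsing_inv A (isUnit_iff_ne_zero.2 hdet), Matrix.one_mul]
    rw [show ((σ ^ (i:ℕ)) (bb j)) = B i j from rfl, ← h2, Matrix.mul_apply]
    rfl
  -- normalized annihilator of gl
  obtain ⟨a0, ha0top, ha0deg, ha0ker⟩ := ann σ hfix (t+1) gl hglind
  have ha00 : a0 0 ≠ 0 := by
    intro h0
    have hall := uniq σ hfix gl hglind a0 (fun _ => 0) ha0deg (fun _ _ => rfl) h0
      (fun l => (ha0ker _).2 (Submodule.subset_span ⟨l, rfl⟩))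
      (fun l => sev_coeff_zero σ _ _)
    exact zero_ne_one ((hall (t+1)).symm.trans ha0top)
  set nn : ℕ → L := fun w => (-(a0 0)⁻¹) * a0 w with hnn
  have hnn0 : nn 0 = -1 := by rw [hnn]; simp only; field_simp
  have hnndeg : ∀ i, t + 1 < i → nn i = 0 := by
    intro i hi; rw [hnn]; simp only; rw [ha0deg i hi, mul_zero]
  have hnnsev : ∀ x : L, sev σ nn (t+1) x = (-(a0 0)⁻¹) * sev σ a0 (t+1) x := by
    intro x; rw [hnn]; exact sev_coeff_mul σ _ a0 (t+1) x
  have hnnkill : ∀ l, sev σ nn (t+1) (gl l) = 0 := by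
    intro l
    rw [hnnsev, (ha0ker _).2 (Submodule.subset_span ⟨l, rfl⟩), mul_zero]
  have hker_eq : ∀ x : L, sev σ nn (t+1) x = 0 ↔ x ∈ Submodule.span K (Set.range gl) := by
    intro x
    rw [hnnsev, mul_eq_zero, ← ha0ker x]
    constructor
    · rintro (h | h)
      · exact absurd h (by simp [ha00])
      · exact h
    · intro h; exact Or.inr h
  have hcomp := comp_lemma σ hfix gl hglind bb nn hnn0 hnnkill X hX'
  set vα : Fin (t+1) → L := fun l => A⁻¹ l 0 with hvα
  set vβ : Fin r → L := fun j => sev σ nn (t+1) (bb j) with hvβ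
  have hTr0 : ∀ (l : Fin (t+1)) (j : Fin r), fieldTrace q m (vα l * vβ j) = 0 := by
    intro l j
    have h3 : fieldTrace q m (vα l * vβ j)
        = fieldTrace q m (adj σ nn (t+1) (vα l) * bb j) := tr_adj hq hm σ hσ nn (t+1) _ _
    rw [h3, claimB σ hfix gl hglind nn hnn0 hnndeg hnnkill l, zero_mul, tr_zero hq]
  refine ⟨vα, vβ, ?_, ?_, ?_, ?_⟩
  · exact (rkq_iff vα).2 (claimC σ hfix gl hglind)
  · apply (rkq_iff vβ).2
    rw [Fintype.linearIndependent_iff]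
    intro μ hμ
    have h1 : sev σ nn (t+1) (∑ j, μ j • bb j) = 0 := by
      show sevLin σ hfix nn (t+1) (∑ j, μ j • bb j) = 0
      rw [map_sum]
      rw [Finset.sum_congr rfl fun j _ => map_smul (sevLin σ hfix nn (t+1)) (μ j) (bb j)]
      exact hμ
    obtain ⟨ν, hν⟩ := (Submodule.mem_span_range_iff_exists_fun K).1 ((hker_eq _).1 h1)
    set cc : Fin (t+1+r) → K :=
      fun jj => Sum.elim (fun l => ν l) (fun j => -μ j) (finSumFinEquiv.symm jj) with hcc
    have hsum : ∑ jj, cc jj • g jj = 0 := by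
      rw [← Equiv.sum_comp finSumFinEquiv (fun jj => cc jj • g jj), Fintype.sum_sum_type]
      simp only [hcc, Equiv.symm_apply_apply, Sum.elim_inl, Sum.elim_inr, neg_smul]
      rw [show (∑ l, ν l • g (finSumFinEquiv (Sum.inl l))) = ∑ l, ν l • gl l from rfl, hν]
      rw [← Finset.sum_add_distrib]
      apply Finset.sum_eq_zero
      intro j _
      rw [add_neg_cancel]
    intro j
    have h4 := Fintype.linearIndependent_iff.1 hgind cc hsum (finSumFinEquiv (Sum.inr j))
    rw [hcc] at h4
    simp only [Equiv.symm_apply_apply, Sum.elim_inr, neg_eq_zero] at h4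
    exact h4
  · intro x hx y hy
    obtain ⟨cβ, hcβ⟩ := (Submodule.mem_span_range_iff_exists_fun K).1 hx
    obtain ⟨cα, hcα⟩ := (Submodule.mem_span_range_iff_exists_fun K).1 hy
    obtain ⟨τ, hτ⟩ := exists_sigma (L := L) hq 1
    rw [← hcβ, ← hcα]
    have expand : (∑ l, cα l • vα l) * (∑ j, cβ j • vβ j)
        = ∑ l, ∑ j, algebraMap K L (cα l) * (algebraMap K L (cβ j) * (vα l * vβ j)) := by
      rw [Finset.sum_mul]
      refine Finset.sum_congr rfl fun l _ => ?_
      rw [Finset.mul_sum]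
      refine Finset.sum_congr rfl fun j _ => ?_
      rw [Algebra.smul_def, Algebra.smul_def]
      ring
    rw [expand, tr_sum' τ hτ]
    apply Finset.sum_eq_zero
    intro l _
    rw [tr_sum' τ hτ]
    apply Finset.sum_eq_zero
    intro j _
    rw [tr_smul hq, tr_smul hq, hTr0 l j, mul_zero, mul_zero]
  · ext i j
    show X i j ^ q ^ s - X i j = _
    rw [← hσ (X i j), hcomp i j, Matrix.vecMulVec_apply]

end Main


section Dual

variable {K L : Type*} [Field K] [Field L] [Algebra K L] [Fintype K] [Fintype L]
variable {q m : ℕ}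

lemma tr_exists_ne (hq : Fintype.card K = q) (hm : Module.finrank K L = m) (hm0 : 0 < m) :
    ∃ z : L, fieldTrace q m z ≠ 0 := by
  by_contra h
  push_neg at h
  have h1q : 1 < q := by rw [← hq]; exact Fintype.one_lt_card
  set P : Polynomial L := ∑ i ∈ Finset.range m, Polynomial.X ^ q ^ i with hP
  have heval : ∀ z : L, P.eval z = fieldTrace q m z := by
    intro z
    rw [hP, Polynomial.eval_finset_sum, fieldTrace]
    exact Finset.sum_congr rfl fun i _ => by rw [Polynomial.eval_pow, Polynomial.eval_X]
  have hdeg : P.natDegree < Fintype.card L := by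
    have hle : P.natDegree ≤ q ^ (m-1) := by
      apply Polynomial.natDegree_sum_le_of_forall_le
      intro i hi
      rw [Polynomial.natDegree_X_pow]
      exact Nat.pow_le_pow_right (by omega) (by have := Finset.mem_range.1 hi; omega)
    have h2 : q ^ (m-1) < q ^ m := Nat.pow_lt_pow_right h1q (by omega)
    rw [cardL hq hm]
    omega
  have hP0 : P = 0 :=
    Polynomial.eq_zero_of_natDegree_lt_card_of_eval_eq_zero P Function.injective_id
      (fun z => by rw [heval]; exact h z) hdeg
  have hc : P.coeff 1 = 1 := by
    rw [hP, Polynomial.finset_sum_coeff]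
    rw [Finset.sum_congr rfl (fun i _ => Polynomial.coeff_X_pow (q ^ i) 1)]
    rw [Finset.sum_eq_single_of_mem 0 (Finset.mem_range.2 hm0)]
    · simp
    · intro i _ hi0
      rw [if_neg (Nat.one_lt_pow hi0 h1q).ne]
  rw [hP0] at hc
  simp at hc

lemma tr_mem (hq : Fintype.card K = q) (hm : Module.finrank K L = m) (z : L) :
    fieldTrace q m z ∈ Set.range (algebraMap K L) := by
  apply (fixq hq _).1
  obtain ⟨τ, hτ⟩ := exists_sigma (L := L) hq 1
  have hτ' : ∀ x : L, τ x = x ^ q := by intro x; rw [hτ, pow_one]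
  calc (fieldTrace q m z) ^ q = τ (fieldTrace q m z) := (hτ' _).symm
    _ = fieldTrace q m (τ z) := by
        rw [tr_tau τ hτ, tr_tau τ hτ, map_sum]
        refine Finset.sum_congr rfl fun i _ => ?_
        rw [← pow_succ_apply' τ i z, pow_succ_apply τ i z]
    _ = fieldTrace q m (z ^ q) := by rw [hτ' z]
    _ = fieldTrace q m z := tr_frob hq hm z

lemma perp_dim (hq : Fintype.card K = q) (hm : Module.finrank K L = m) (hm0 : 0 < m)
    (S : Submodule K L) :
    ∃ Sp : Submodule K L,
      (∀ x : L, x ∈ Sp ↔ ∀ s ∈ S, fieldTrace q m (s * x) = 0) ∧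
      Module.finrank K Sp = m - Module.finrank K S := by
  haveI : FiniteDimensional K L := Module.Finite.of_finite
  obtain ⟨τ, hτ⟩ := exists_sigma (L := L) hq 1
  have hamInj := (algebraMap K L).injective
  set T0 : L → K := fun z => (tr_mem hq hm z).choose with hT0
  have ham : ∀ z : L, algebraMap K L (T0 z) = fieldTrace q m z :=
    fun z => (tr_mem hq hm z).choose_spec
  have hT0add : ∀ x y : L, T0 (x + y) = T0 x + T0 y := fun x y =>
    hamInj (by rw [map_add, ham, ham, ham, tr_add' τ hτ])
  have hT0smul : ∀ (c : K) (x : L), T0 (c • x) = c * T0 x := fun c x =>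
    hamInj (by rw [map_mul, ham, ham, Algebra.smul_def, tr_smul hq])
  set Φ : L →ₗ[K] Module.Dual K L :=
    { toFun := fun x =>
      { toFun := fun y => T0 (x * y)
        map_add' := fun a b => by
          show T0 (x * (a + b)) = T0 (x * a) + T0 (x * b)
          rw [mul_add]; exact hT0add _ _
        map_smul' := fun c a => by
          show T0 (x * (c • a)) = c * T0 (x * a)
          rw [← hT0smul c (x * a)]
          congr 1
          rw [Algebra.smul_def, Algebra.smul_def]
          ring }
      map_add' := fun x y => LinearMap.ext fun a => by
        show T0 ((x + y) * a) = T0 (x * a) + T0 (y * a)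
        rw [add_mul]; exact hT0add _ _
      map_smul' := fun c x => LinearMap.ext fun a => by
        show T0 ((c • x) * a) = c * T0 (x * a)
        rw [← hT0smul c (x * a)]
        congr 1
        rw [Algebra.smul_def, Algebra.smul_def]
        ring } with hΦ
  have hΦinj : Function.Injective Φ := by
    rw [injective_iff_map_eq_zero]
    intro x hx
    by_contra hx0
    obtain ⟨z, hz⟩ := tr_exists_ne hq hm hm0
    have h1 : T0 (x * (x⁻¹ * z)) = 0 := DFunLike.congr_fun hx (x⁻¹ * z)
    rw [← mul_assoc, mul_inv_cancel₀ hx0, one_mul] at h1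
    exact hz (by rw [← ham z, h1, map_zero])
  have hΦrange : LinearMap.range Φ = ⊤ := by
    apply Submodule.eq_top_of_finrank_eq
    have h1 := LinearMap.finrank_range_add_finrank_ker Φ
    rw [LinearMap.ker_eq_bot.2 hΦinj, finrank_bot, add_zero] at h1
    rw [h1, Subspace.dual_finrank_eq]
  have hΦsurj : Function.Surjective Φ := LinearMap.range_eq_top.1 hΦrange
  set Ψ : L →ₗ[K] Module.Dual K S := S.dualRestrict.comp Φ with hΨ
  have hΨsurj : Function.Surjective Ψ := (Subspace.dualRestrict_surjective (W := S)).comp hΦsurj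
  refine ⟨LinearMap.ker Ψ, ?_, ?_⟩
  · intro x
    rw [LinearMap.mem_ker]
    constructor
    · intro hx s hs
      have h1 : T0 (x * s) = 0 := DFunLike.congr_fun hx ⟨s, hs⟩
      have h2 : algebraMap K L (T0 (x * s)) = 0 := by rw [h1, map_zero]
      rw [ham] at h2
      rw [mul_comm s x]
      exact h2
    · intro hx
      apply LinearMap.ext
      intro sv
      show T0 (x * (sv : L)) = 0
      apply hamInj
      rw [ham, map_zero, mul_comm]
      exact hx (sv : L) sv.2
  · have h1 := LinearMap.finrank_range_add_finrank_ker Ψ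
    rw [LinearMap.range_eq_top.2 hΨsurj] at h1
    rw [finrank_top, Subspace.dual_finrank_eq] at h1
    omega

end Dual


section Back

variable {K L : Type*} [Field K] [Field L] [Algebra K L] [Fintype K] [Fintype L]
variable {q m : ℕ}

theorem backward {s : ℕ} (hq : Fintype.card K = q) (hm : Module.finrank K L = m)
    {t r : ℕ} (hmkr : t + 1 + r ≤ m)
    (σ : L ≃+* L) (hσ : ∀ x : L, σ x = x ^ q ^ s) (hfix : FixHyp σ K)
    (X : Matrix (Fin (t+1)) (Fin r) L)
    (α : Fin (t+1) → L) (β : Fin r → L)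
    (hαr : rkq K α = t+1) (hβr : rkq K β = r)
    (horth : ∀ x ∈ Submodule.span K (Set.range β), ∀ y ∈ Submodule.span K (Set.range α),
      fieldTrace q m (y * x) = 0)
    (hPhi : PhiS q s X = Matrix.vecMulVec α β) :
    IsGabidulin K q s (t+1) (CX X) := by
  haveI : FiniteDimensional K L := Module.Finite.of_finite
  have hαind : LinearIndependent K α := (rkq_iff α).1 hαr
  have hβind : LinearIndependent K β := (rkq_iff β).1 hβr
  set Sα := Submodule.span K (Set.range α) with hSα
  have hSαdim : Module.finrank K Sα = t + 1 := hαr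
  -- annihilator of span α w.r.t. σ⁻¹
  obtain ⟨mm0, hmm0top, hmm0deg, hmm0ker⟩ := ann σ.symm hfix.symm (t+1) α hαind
  have hmm00 : mm0 0 ≠ 0 := by
    intro h0
    have hall := uniq σ.symm hfix.symm α hαind mm0 (fun _ => 0) hmm0deg (fun _ _ => rfl) h0
      (fun l => (hmm0ker _).2 (Submodule.subset_span ⟨l, rfl⟩))
      (fun l => sev_coeff_zero σ.symm _ _)
    exact zero_ne_one ((hall (t+1)).symm.trans hmm0top)
  set mm : ℕ → L := fun w => (-(mm0 0)⁻¹) * mm0 w with hmm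
  have hmmval : ∀ x : L, sev σ.symm mm (t+1) x = (-(mm0 0)⁻¹) * sev σ.symm mm0 (t+1) x :=
    fun x => sev_coeff_mul σ.symm _ mm0 (t+1) x
  have hmmker : ∀ x : L, sev σ.symm mm (t+1) x = 0 ↔ x ∈ Sα := by
    intro x
    rw [hmmval, mul_eq_zero, ← hmm0ker x]
    constructor
    · rintro (h | h)
      · exact absurd h (by simp [hmm00])
      · exact h
    · exact Or.inr
  have hmm0' : mm 0 = -1 := by rw [hmm]; simp only; field_simp
  have hmmdeg : ∀ i, t + 1 < i → mm i = 0 := by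
    intro i hi; rw [hmm]; simp only; rw [hmm0deg i hi, mul_zero]
  -- the twisted polynomial nn with adjoint mm
  set nn : ℕ → L := fun i => (σ ^ i) (mm i) with hnn
  have hnn0 : nn 0 = -1 := by rw [hnn]; simp only [pow_zero_apply]; exact hmm0'
  have hnndeg : ∀ i, t + 1 < i → nn i = 0 := by
    intro i hi; rw [hnn]; simp only; rw [hmmdeg i hi, map_zero]
  have hadj : ∀ y : L, adj σ nn (t+1) y = sev σ.symm mm (t+1) y := by
    intro y
    rw [adj, sev]
    refine Finset.sum_congr rfl fun i _ => ?_
    rw [hnn, map_mul, symm_pow_apply σ i (mm i)]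
  set NL := sevLin σ hfix nn (t+1) with hNL
  have hkerbound : Module.finrank K (LinearMap.ker NL) ≤ t + 1 :=
    ker_bound σ hfix nn (t+1) hnndeg ⟨0, by rw [hnn0]; exact neg_ne_zero.2 one_ne_zero⟩
  obtain ⟨Sp, hSpmem, hSpdim⟩ := perp_dim hq hm (by omega) Sα
  have hSpdim' : Module.finrank K Sp = m - (t+1) := by rw [hSpdim, hSαdim]
  have hIm : LinearMap.range NL ≤ Sp := by
    rintro _ ⟨u, rfl⟩
    rw [hSpmem]
    intro sval hs
    have h1 : fieldTrace q m (sval * NL u) = fieldTrace q m (adj σ nn (t+1) sval * u) :=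
      tr_adj hq hm σ hσ nn (t+1) sval u
    rw [h1, hadj sval, (hmmker sval).2 hs, zero_mul, tr_zero hq]
  have hrn := LinearMap.finrank_range_add_finrank_ker NL
  rw [hm] at hrn
  have hle : Module.finrank K (LinearMap.range NL) ≤ Module.finrank K Sp :=
    Submodule.finrank_mono hIm
  have heqrange : LinearMap.range NL = Sp :=
    Submodule.eq_of_le_of_finrank_le hIm (by omega)
  have hkerdim : Module.finrank K (LinearMap.ker NL) = t + 1 := by
    rw [heqrange, hSpdim'] at hrn
    omega
  -- preimages of β
  have hβmem : ∀ j, β j ∈ LinearMap.range NL := by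
    intro j
    rw [heqrange, hSpmem]
    intro sval hs
    exact horth (β j) (Submodule.subset_span ⟨j, rfl⟩) sval hs
  choose w hw using hβmem
  -- basis of the kernel
  set B := Module.finBasisOfFinrankEq K (LinearMap.ker NL) hkerdim with hB
  set g0 : Fin (t+1) → L := fun l => ((B l : LinearMap.ker NL) : L) with hg0
  have hg0ind : LinearIndependent K g0 :=
    B.linearIndependent.map' (LinearMap.ker NL).subtype (Submodule.ker_subtype _)
  have hg0ker : ∀ l, sev σ nn (t+1) (g0 l) = 0 := fun l => (B l).2
  set A0 := Matrix.of fun i l : Fin (t+1) => (σ ^ (i:ℕ)) (g0 l) with hA0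
  have hdet0 : A0.det ≠ 0 := moore_det σ hfix g0 hg0ind
  set v : Fin (t+1) → L := fun l => A0⁻¹ l 0 with hv
  have hvadj : ∀ l, adj σ nn (t+1) (v l) = 0 :=
    claimB σ hfix g0 hg0ind nn hnn0 hnndeg hg0ker
  have hvmem : ∀ l, v l ∈ Sα := by
    intro l
    have h2 := hvadj l
    rw [hadj] at h2
    exact (hmmker _).1 h2
  have hvind : LinearIndependent K v := claimC σ hfix g0 hg0ind
  have hvspan : Submodule.span K (Set.range v) = Sα := by
    apply Submodule.eq_of_le_of_finrank_le
    · rw [Submodule.span_le]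
      rintro _ ⟨l, rfl⟩
      exact hvmem l
    · rw [finrank_span_eq_card hvind, Fintype.card_fin, hSαdim]
  have hαmem : ∀ l0, α l0 ∈ Submodule.span K (Set.range v) := by
    intro l0
    rw [hvspan]
    exact Submodule.subset_span ⟨l0, rfl⟩
  choose cc hcc using fun l0 => (Submodule.mem_span_range_iff_exists_fun K).1 (hαmem l0)
  set C : Matrix (Fin (t+1)) (Fin (t+1)) K := Matrix.of (fun l0 l => cc l0 l) with hC
  have hCdet : C.det ≠ 0 := by
    intro hdet
    obtain ⟨dvec, hd0, hdC⟩ := Matrix.exists_vecMul_eq_zero_iff.2 hdet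
    have hzero : ∑ l0, dvec l0 • α l0 = 0 := by
      calc ∑ l0, dvec l0 • α l0 = ∑ l0, dvec l0 • ∑ l, cc l0 l • v l := by
            refine Finset.sum_congr rfl fun l0 _ => ?_
            rw [hcc l0]
        _ = ∑ l0, ∑ l, (dvec l0 * cc l0 l) • v l := by
            refine Finset.sum_congr rfl fun l0 _ => ?_
            rw [Finset.smul_sum]
            exact Finset.sum_congr rfl fun l _ => (smul_smul _ _ _)
        _ = ∑ l, (∑ l0, dvec l0 * cc l0 l) • v l := by
            rw [Finset.sum_comm]
            exact Finset.sum_congr rfl fun l _ => (Finset.sum_smul).symm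
        _ = 0 := by
            apply Finset.sum_eq_zero
            intro l _
            have h3 : (Matrix.vecMul dvec C) l = 0 := congrFun hdC l
            rw [show (∑ l0, dvec l0 * cc l0 l) = Matrix.vecMul dvec C l from rfl, h3, zero_smul]
    exact hd0 (funext fun l0 => Fintype.linearIndependent_iff.1 hαind dvec hzero l0)
  set P : Matrix (Fin (t+1)) (Fin (t+1)) K := C⁻¹ with hP
  have hPC : P * C = 1 := Matrix.nonsing_inv_mul C (isUnit_iff_ne_zero.2 hCdet)
  have hCP : C * P = 1 := Matrix.mul_nonsing_inv C (isUnit_iff_ne_zero.2 hCdet)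
  set g1 : Fin (t+1) → L := fun l => ∑ l0, algebraMap K L (P l0 l) * g0 l0 with hg1
  have hg1ker : ∀ l, sev σ nn (t+1) (g1 l) = 0 := by
    intro l
    show NL (g1 l) = 0
    rw [hg1]
    simp only
    rw [map_sum]
    apply Finset.sum_eq_zero
    intro l0 _
    rw [← Algebra.smul_def, map_smul]
    rw [show NL (g0 l0) = 0 from hg0ker l0, smul_zero]
  set Pm := P.map (algebraMap K L) with hPm
  set Cm := C.map (algebraMap K L) with hCm
  set A1 := Matrix.of fun i l : Fin (t+1) => (σ ^ (i:ℕ)) (g1 l) with hA1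
  have hA1eq : A1 = A0 * Pm := by
    ext i l
    rw [Matrix.mul_apply]
    show (σ ^ (i:ℕ)) (g1 l) = _
    rw [hg1]
    simp only
    rw [map_sum]
    refine Finset.sum_congr rfl fun l0 _ => ?_
    rw [map_mul, hfix.pow_alg]
    rw [mul_comm]
    rfl
  have hPmCm : Pm * Cm = 1 := by
    rw [hPm, hCm, ← Matrix.map_mul, hPC]
    exact Matrix.map_one _ (map_zero _) (map_one _)
  have hCmPm : Cm * Pm = 1 := by
    rw [hPm, hCm, ← Matrix.map_mul, hCP]
    exact Matrix.map_one _ (map_zero _) (map_one _)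
  have hPmdet : Pm.det ≠ 0 := by
    intro h0
    have := Matrix.det_mul Pm Cm
    rw [hPmCm, h0, zero_mul, Matrix.det_one] at this
    exact (one_ne_zero : (1:L) ≠ 0) this
  have hA1det : A1.det ≠ 0 := by
    rw [hA1eq, Matrix.det_mul]
    exact mul_ne_zero hdet0 hPmdet
  have hPminv : Pm⁻¹ = Cm := Matrix.inv_eq_right_inv hPmCm
  have hA1inv : A1⁻¹ = Cm * A0⁻¹ := by
    rw [hA1eq, Matrix.mul_inv_rev, hPminv]
  have hv1 : ∀ l, A1⁻¹ l 0 = α l := by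
    intro l
    rw [hA1inv, Matrix.mul_apply]
    calc ∑ l0, Cm l l0 * A0⁻¹ l0 0
        = ∑ l0, cc l l0 • v l0 := by
          refine Finset.sum_congr rfl fun l0 _ => ?_
          rw [Algebra.smul_def]
          rfl
      _ = α l := hcc l
  have hg1ind : LinearIndependent K g1 := by
    rw [Fintype.linearIndependent_iff]
    intro lam hlam
    have hexp : ∑ l0, (∑ l, P l0 l * lam l) • g0 l0 = 0 := by
      calc ∑ l0, (∑ l, P l0 l * lam l) • g0 l0
          = ∑ l0, ∑ l, (P l0 l * lam l) • g0 l0 :=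
            Finset.sum_congr rfl fun l0 _ => Finset.sum_smul
        _ = ∑ l, ∑ l0, (P l0 l * lam l) • g0 l0 := Finset.sum_comm
        _ = ∑ l, lam l • g1 l := by
            refine Finset.sum_congr rfl fun l _ => ?_
            rw [hg1]
            simp only
            rw [Finset.smul_sum]
            refine Finset.sum_congr rfl fun l0 _ => ?_
            rw [Algebra.smul_def, Algebra.smul_def, map_mul]
            ring
        _ = 0 := hlam
    have hPlam : ∀ l0, ∑ l, P l0 l * lam l = 0 :=
      fun l0 => Fintype.linearIndependent_iff.1 hg0ind _ hexp l0
    have hPv : P.mulVec lam = 0 := funext fun l0 => hPlam l0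
    have hlam0 : lam = 0 := by
      have h4 : C.mulVec (P.mulVec lam) = lam := by
        rw [Matrix.mulVec_mulVec, hCP, Matrix.one_mulVec]
      rw [hPv, Matrix.mulVec_zero] at h4
      exact h4.symm
    exact fun l => congrFun hlam0 l
  -- the systematic matrix X' of the Gabidulin code generated by (g1, w)
  set Bw := Matrix.of (fun (i : Fin (t+1)) (j : Fin r) => (σ ^ (i:ℕ)) (w j)) with hBw
  set X' : Matrix (Fin (t+1)) (Fin r) L := A1⁻¹ * Bw with hX'def
  have hX'prop : ∀ (i : Fin (t+1)) (j : Fin r),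
      (σ ^ (i:ℕ)) (w j) = ∑ l, (σ ^ (i:ℕ)) (g1 l) * X' l j := by
    intro i j
    have h5 : (A1 * X') i j = Bw i j := by
      rw [hX'def, ← Matrix.mul_assoc, Matrix.mul_nonsing_inv A1 (isUnit_iff_ne_zero.2 hA1det),
        Matrix.one_mul]
    rw [show (σ ^ (i:ℕ)) (w j) = Bw i j from rfl, ← h5, Matrix.mul_apply]
    rfl
  have hcomp := comp_lemma σ hfix g1 hg1ind w nn hnn0 hg1ker X' hX'prop
  have hcomp' : ∀ l j, σ (X' l j) - X' l j = α l * β j := by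
    intro l j
    rw [hcomp l j, hv1 l, show sev σ nn (t+1) (w j) = β j from hw j]
  have hPhiX : ∀ l j, σ (X l j) - X l j = α l * β j := by
    intro l j
    have h6 : PhiS q s X l j = Matrix.vecMulVec α β l j := by rw [hPhi]
    rw [Matrix.vecMulVec_apply] at h6
    rw [hσ (X l j)]
    exact h6
  have hE : ∀ l j, σ (X l j - X' l j) = X l j - X' l j := by
    intro l j
    rw [map_sub]
    linear_combination hPhiX l j - hcomp' l j
  have hEmem : ∀ l j, ∃ c : K, algebraMap K L c = X l j - X' l j :=
    fun l j => (hfix _).1 (hE l j)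
  set b' : Fin r → L := fun j => w j + ∑ l, (X l j - X' l j) * g1 l with hb'
  have hXb : ∀ (i : Fin (t+1)) (j : Fin r),
      (σ ^ (i:ℕ)) (b' j) = ∑ l, (σ ^ (i:ℕ)) (g1 l) * X l j := by
    intro i j
    rw [hb']
    simp only
    rw [map_add, map_sum, hX'prop i j]
    have h7 : ∀ l, (σ ^ (i:ℕ)) ((X l j - X' l j) * g1 l)
        = (X l j - X' l j) * (σ ^ (i:ℕ)) (g1 l) := by
      intro l
      obtain ⟨c, hc⟩ := hEmem l j
      rw [← hc, map_mul, hfix.pow_alg]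
    rw [Finset.sum_congr rfl fun l _ => h7 l, ← Finset.sum_add_distrib]
    refine Finset.sum_congr rfl fun l _ => ?_
    ring
  have hspan := span_eq_gab σ hfix g1 hg1ind b' X hXb
  have hNLb' : ∀ j, NL (b' j) = β j := by
    intro j
    rw [hb']
    simp only
    rw [map_add, map_sum, show NL (w j) = β j from hw j]
    have h8 : ∀ l, NL ((X l j - X' l j) * g1 l) = 0 := by
      intro l
      obtain ⟨c, hc⟩ := hEmem l j
      rw [← hc, ← Algebra.smul_def, map_smul, show NL (g1 l) = 0 from hg1ker l, smul_zero]
    rw [Finset.sum_congr rfl fun l _ => h8 l, Finset.sum_const_zero, add_zero]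
  set G : Fin (t+1+r) → L := fun j => Sum.elim g1 b' (finSumFinEquiv.symm j) with hG
  have hGind : LinearIndependent K G := by
    rw [Fintype.linearIndependent_iff]
    intro c hc
    have hsplit : ∑ l, c (finSumFinEquiv (Sum.inl l)) • g1 l
        + ∑ j, c (finSumFinEquiv (Sum.inr j)) • b' j = 0 := by
      rw [← hc, ← Equiv.sum_comp finSumFinEquiv (fun jj => c jj • G jj), Fintype.sum_sum_type]
      congr 1
      · refine Finset.sum_congr rfl fun l _ => ?_
        rw [hG]
        simp only [Equiv.symm_apply_apply, Sum.elim_inl]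
      · refine Finset.sum_congr rfl fun j _ => ?_
        rw [hG]
        simp only [Equiv.symm_apply_apply, Sum.elim_inr]
    have hNL0 : ∑ j, c (finSumFinEquiv (Sum.inr j)) • β j = 0 := by
      have h9 := congrArg NL hsplit
      rw [map_add, map_sum, map_sum, map_zero] at h9
      have e1 : ∑ l, NL (c (finSumFinEquiv (Sum.inl l)) • g1 l) = 0 :=
        Finset.sum_eq_zero fun l _ => by
          rw [map_smul, show NL (g1 l) = 0 from hg1ker l, smul_zero]
      have e2 : ∑ j, NL (c (finSumFinEquiv (Sum.inr j)) • b' j)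
          = ∑ j, c (finSumFinEquiv (Sum.inr j)) • β j :=
        Finset.sum_congr rfl fun j _ => by rw [map_smul, hNLb' j]
      rw [e1, e2, zero_add] at h9
      exact h9
    have hcr : ∀ j, c (finSumFinEquiv (Sum.inr j)) = 0 :=
      fun j => Fintype.linearIndependent_iff.1 hβind _ hNL0 j
    have hcl : ∀ l, c (finSumFinEquiv (Sum.inl l)) = 0 := by
      have h11 : ∑ j, c (finSumFinEquiv (Sum.inr j)) • b' j = 0 :=
        Finset.sum_eq_zero fun j _ => by rw [hcr j, zero_smul]
      rw [h11, add_zero] at hsplit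
      exact fun l => Fintype.linearIndependent_iff.1 hg1ind _ hsplit l
    intro jj
    rcases hjj : finSumFinEquiv.symm jj with l | j
    · have hjj' : jj = finSumFinEquiv (Sum.inl l) := by rw [← hjj, Equiv.apply_symm_apply]
      rw [hjj']; exact hcl l
    · have hjj' : jj = finSumFinEquiv (Sum.inr j) := by rw [← hjj, Equiv.apply_symm_apply]
      rw [hjj']; exact hcr j
  refine ⟨G, (rkq_iff G).2 hGind, ?_⟩
  rw [hspan]
  congr 1
  apply congrArg
  funext i
  funext j
  rw [pow_sigma_eq σ hσ]

end Back

end SGab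

/-- standard form of Gabidulin codes: `C_X` is a generalized Gabidulin code
of parameter `s` iff `Φ_s(X) = αᵀβ` for some `α, β` with `rk_q(α) = k`, `rk_q(β) = r` and
`supp_q(β) ⊆ supp_q(α)^×`. -/
theorem stmt12 {K L : Type*} [Field K] [Field L] [Algebra K L] [Fintype K] [Fintype L]
    (q m k r s : ℕ) (hq : Fintype.card K = q) (hm : Module.finrank K L = m)
    (hk : 0 < k) (hr : 0 < r) (hnm : k + r ≤ m) (hs : 0 < s) (hsm : Nat.Coprime s m)
    (X : Matrix (Fin k) (Fin r) L) :
    IsGabidulin K q s k (CX X) ↔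
      ∃ (α : Fin k → L) (β : Fin r → L),
        rkq K α = k ∧ rkq K β = r ∧
        (∀ x ∈ Submodule.span K (Set.range β), ∀ y ∈ Submodule.span K (Set.range α),
          fieldTrace q m (y * x) = 0) ∧
        PhiS q s X = Matrix.vecMulVec α β := by
  obtain ⟨t, rfl⟩ : ∃ t, k = t + 1 := ⟨k - 1, by omega⟩
  have hm1 : 1 < m := by omega
  obtain ⟨σ, hσ⟩ := SGab.exists_sigma (L := L) hq s
  have hfix : SGab.FixHyp σ K := fun x => by
    rw [hσ x]; exact SGab.fix_iff hq hm hsm hm1 x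
  constructor
  · intro hGab
    exact SGab.forward hq hm σ hσ hfix X hGab
  · rintro ⟨α, β, hαr, hβr, horth, hPhi⟩
    exact SGab.backward hq hm (by omega) σ hσ hfix X α β hαr hβr horth hPhi
end

section
/- Let 0 < k < n ≤ m and let s be a positive integer coprime to m. The number of distinct k-dimensional generalized Gabidulin codes of length n and parameter s over 𝔽_{q^m}, i.e., the cardinality of the set { G_{k,s}(g) : g ∈ 𝔽_{q^m}^n, rk_q(g) = n } of subspaces of 𝔽_{q^m}^n, equals ∏_{i=1}^{n−1} (q^m − q^i). -/
open Finset

section AuxGabidulin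

set_option linter.unusedSectionVars false
set_option maxHeartbeats 1000000

open LinearMap Module Finset

variable {K L : Type*} [Field K] [Field L] [Algebra K L] [Fintype K] [Fintype L]

noncomputable def tauLin (K : Type*) {L : Type*} [Field K] [Field L] [Algebra K L]
    (τ : L →+* L) (hτ : ∀ a : K, τ (algebraMap K L a) = algebraMap K L a) : L →ₗ[K] L where
  toFun := τ
  map_add' := map_add τ
  map_smul' := by
    intro a x
    simp only [Algebra.smul_def, map_mul, hτ, RingHom.id_apply]

lemma tauLin_pow_apply (τ : L →+* L) (hτ : ∀ a : K, τ (algebraMap K L a) = algebraMap K L a)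
    (i : ℕ) (x : L) : ((tauLin K τ hτ) ^ i) x = (⇑τ)^[i] x := by
  rw [Module.End.pow_apply]; rfl

lemma Psum_apply (τ : L →+* L) (hτ : ∀ a : K, τ (algebraMap K L a) = algebraMap K L a)
    (c : ℕ → L) (r : ℕ) (x : L) :
    (∑ i ∈ range r, c i • (tauLin K τ hτ) ^ i) x = ∑ i ∈ range r, c i * (⇑τ)^[i] x := by
  rw [LinearMap.sum_apply]
  exact Finset.sum_congr rfl fun i _ => by
    rw [LinearMap.smul_apply, smul_eq_mul, tauLin_pow_apply]

lemma finrank_ker_comp (f g : L →ₗ[K] L) :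
    finrank K (ker (f ∘ₗ g)) ≤ finrank K (ker f) + finrank K (ker g) := by
  set N := ker (f ∘ₗ g) with hN
  have hmem : ∀ x : N, g x ∈ ker f := fun x => x.2
  let φ : N →ₗ[K] ker f := (g.domRestrict N).codRestrict (ker f) hmem
  have h1 : finrank K N = finrank K (range φ) + finrank K (ker φ) :=
    (finrank_range_add_finrank_ker φ).symm
  have h2 : finrank K (range φ) ≤ finrank K (ker f) := (range φ).finrank_le
  have h3 : finrank K (ker φ) ≤ finrank K (ker g) := by
    let ψ : ker φ →ₗ[K] ker g :=
      ((N.subtype).comp (ker φ).subtype).codRestrict (ker g) (fun x => by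
        have hx : φ x.1 = 0 := x.2
        exact Subtype.ext_iff.1 hx)
    have hψ : Function.Injective ψ := by
      intro a b hab
      have h := Subtype.ext_iff.1 hab
      simp only [ψ, LinearMap.codRestrict_apply, LinearMap.comp_apply] at h
      have : ((a : N) : L) = ((b : N) : L) := h
      exact Subtype.ext (Subtype.ext this)
    exact LinearMap.finrank_le_finrank_of_injective hψ
  omega


lemma kerdim (τ : L →+* L) (hτ : ∀ a : K, τ (algebraMap K L a) = algebraMap K L a)
    (hinj : Function.Injective τ)
    (hfix : ∀ x : L, τ x = x → ∃ a : K, algebraMap K L a = x) :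
    ∀ (t : ℕ) (c : ℕ → L), c t ≠ 0 →
      finrank K (ker (∑ i ∈ range (t + 1), c i • (tauLin K τ hτ) ^ i)) ≤ t := by
  intro t
  induction t with
  | zero =>
    intro c hc
    have : ker (∑ i ∈ range 1, c i • (tauLin K τ hτ) ^ i) = ⊥ := by
      rw [eq_bot_iff]
      intro x hx
      have : c 0 * x = 0 := by
        have := (LinearMap.mem_ker).1 hx
        rwa [Psum_apply, Finset.sum_range_one, Function.iterate_zero_apply] at this
      have : x = 0 := by
        rcases mul_eq_zero.1 this with h | h
        · exact absurd h hc
        · exact h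
      simpa using this
    rw [this, finrank_bot]
  | succ t ih =>
    intro c hc
    set f := ∑ i ∈ range (t + 2), c i • (tauLin K τ hτ) ^ i with hf
    by_cases hker : ker f = ⊥
    · rw [hker, finrank_bot]; omega
    · obtain ⟨a, haf, ha⟩ := Submodule.exists_mem_ne_zero_of_ne_bot hker
      set u := τ a / a with hu
      have hua : τ a = u * a := by rw [hu, div_mul_cancel₀ _ ha]
      have hu0 : u ≠ 0 := by
        have : τ a ≠ 0 := fun h => ha (hinj (by simpa using h))
        exact div_ne_zero this ha
      -- downward recursion for quotient coefficients
      set F : ℕ → L := fun j => Nat.rec (c (t + 1))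
        (fun j Fj => c (t - j) + Fj * (⇑τ)^[t - j] u) j with hF
      set c' : ℕ → L := fun i => F (t - i) with hc'
      have hc't : c' t = c (t + 1) := by simp [hc', hF]
      have hc'rec : ∀ i, i < t → c i.succ = c' i - c' (i + 1) * (⇑τ)^[i + 1] u := by
        intro i hi
        have h1 : t - i = (t - i - 1) + 1 := by omega
        have h2 : t - (t - i - 1) = i + 1 := by omega
        have h3 : t - i - 1 = t - (i + 1) := by omega
        have : c' i = c (i + 1) + c' (i + 1) * (⇑τ)^[i + 1] u := by
          show F (t - i) = _
          rw [h1]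
          show c (t - (t - i - 1)) + F (t - i - 1) * (⇑τ)^[t - (t - i - 1)] u = _
          rw [h2, h3]
        rw [this]; ring
      set g := ∑ i ∈ range (t + 1), c' i • (tauLin K τ hτ) ^ i with hg
      set Q : L →ₗ[K] L := tauLin K τ hτ - u • LinearMap.id with hQ
      have hQapp : ∀ x, Q x = τ x - u * x := fun x => rfl
      have hQa : Q a = 0 := by rw [hQapp, hua]; ring
      -- the division identity
      have key : ∀ x, f x = g (Q x) + (c 0 + c' 0 * u) * x := by
        intro x
        rw [Psum_apply, Psum_apply]
        have hQsub : ∀ i, (⇑τ)^[i] (Q x) = (⇑τ)^[i+1] x - (⇑τ)^[i] u * (⇑τ)^[i] x := by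
          intro i
          rw [hQapp]
          rw [iterate_map_sub, iterate_map_mul, Function.iterate_succ_apply]
        calc ∑ i ∈ range (t + 2), c i * (⇑τ)^[i] x
            = c 0 * x + ∑ i ∈ range (t + 1), c (i + 1) * (⇑τ)^[i + 1] x := by
              rw [Finset.sum_range_succ']
              simp [add_comm]
          _ = c 0 * x + (∑ i ∈ range (t + 1), c' i * (⇑τ)^[i + 1] x
                - ∑ i ∈ range t, c' (i + 1) * ((⇑τ)^[i + 1] u * (⇑τ)^[i + 1] x)) := by
              congr 1
              rw [Finset.sum_range_succ, Finset.sum_range_succ (fun i => c' i * (⇑τ)^[i+1] x),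
                ← hc't]
              have hsplit : ∑ i ∈ range t, c (i+1) * (⇑τ)^[i+1] x
                  = ∑ i ∈ range t,
                      (c' i * (⇑τ)^[i+1] x - c' (i+1) * ((⇑τ)^[i+1] u * (⇑τ)^[i+1] x)) := by
                refine Finset.sum_congr rfl fun i hi => ?_
                rw [hc'rec i (Finset.mem_range.1 hi)]
                ring
              rw [hsplit, Finset.sum_sub_distrib]
              ring
          _ = (∑ i ∈ range (t + 1), c' i * (⇑τ)^[i] (Q x)) + (c 0 + c' 0 * u) * x := by
              have : ∑ i ∈ range (t + 1), c' i * (⇑τ)^[i] (Q x)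
                  = ∑ i ∈ range (t + 1), c' i * (⇑τ)^[i + 1] x
                    - ∑ i ∈ range (t + 1), c' i * ((⇑τ)^[i] u * (⇑τ)^[i] x) := by
                rw [← Finset.sum_sub_distrib]
                refine Finset.sum_congr rfl fun i _ => ?_
                rw [hQsub]; ring
              rw [this, Finset.sum_range_succ' (fun i => c' i * ((⇑τ)^[i] u * (⇑τ)^[i] x))]
              simp only [Function.iterate_zero_apply]
              ring
      have hr : c 0 + c' 0 * u = 0 := by
        have h0 : f a = 0 := haf
        have := key a
        rw [h0, hQa, map_zero, zero_add] at this
        rcases mul_eq_zero.1 this.symm with h | h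
        · exact h
        · exact absurd h ha
      have hfg : f = g ∘ₗ Q := by
        ext x
        rw [LinearMap.comp_apply, key x, hr, zero_mul, add_zero]
      have hkerQ : finrank K (ker Q) ≤ 1 := by
        have hle : ker Q ≤ Submodule.span K {a} := by
          intro x hx
          have hx' : τ x = u * x := by
            have := (LinearMap.mem_ker).1 hx
            rw [hQapp] at this
            exact sub_eq_zero.1 this
          by_cases h0 : x = 0
          · simp [h0]
          · have hxa : τ (x * a⁻¹) = x * a⁻¹ := by
              rw [map_mul, map_inv₀, hx', hua, mul_inv]
              field_simp
            obtain ⟨b, hb⟩ := hfix _ hxa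
            rw [Submodule.mem_span_singleton]
            refine ⟨b, ?_⟩
            rw [Algebra.smul_def, hb]
            field_simp
          -- done
        calc finrank K (ker Q) ≤ finrank K (Submodule.span K ({a} : Set L)) :=
              Submodule.finrank_mono hle
          _ = 1 := finrank_span_singleton ha
      have hkg : finrank K (ker g) ≤ t := by
        have : c' t ≠ 0 := by rw [hc't]; exact hc
        exact ih c' this
      calc finrank K (ker f) = finrank K (ker (g ∘ₗ Q)) := by rw [hfg]
        _ ≤ finrank K (ker g) + finrank K (ker Q) := finrank_ker_comp g Q
        _ ≤ t + 1 := by omega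

/-- Moore-matrix row independence, in `ℕ`-indexed form. -/
lemma moore_indep (τ : L →+* L) (hτ : ∀ a : K, τ (algebraMap K L a) = algebraMap K L a)
    (hinj : Function.Injective τ)
    (hfix : ∀ x : L, τ x = x → ∃ a : K, algebraMap K L a = x)
    {n : ℕ} (g : Fin n → L) (hg : LinearIndependent K g) (t : ℕ) (ht : t ≤ n)
    (u : ℕ → L) (hsum : ∀ j, ∑ i ∈ range t, u i * (⇑τ)^[i] (g j) = 0) :
    ∀ i, i < t → u i = 0 := by
  by_contra hcon
  push_neg at hcon
  obtain ⟨i0, hi0t, hi0⟩ := hcon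
  classical
  set dset := (range t).filter (fun i => u i ≠ 0) with hdset
  have hne : dset.Nonempty := ⟨i0, by simp [hdset, hi0t, hi0]⟩
  set d := dset.max' hne with hd
  have hdmem := dset.max'_mem hne
  have hud : u d ≠ 0 := (Finset.mem_filter.1 hdmem).2
  have hdt : d < t := Finset.mem_range.1 (Finset.mem_filter.1 hdmem).1
  have htop : ∀ i, d < i → i < t → u i = 0 := by
    intro i hdi hit
    by_contra hui
    exact absurd (dset.le_max' i (by simp [hdset, hit, hui])) (by omega)
  set P := ∑ i ∈ range (d + 1), u i • (tauLin K τ hτ) ^ i with hP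
  have hPg : ∀ j, P (g j) = 0 := by
    intro j
    rw [Psum_apply]
    rw [Finset.sum_subset (Finset.range_subset_range.2 (by omega : d + 1 ≤ t))]
    · exact hsum j
    · intro i hit hid
      rw [htop i (by simpa using hid) (Finset.mem_range.1 hit), zero_mul]
  have hle : Submodule.span K (Set.range g) ≤ ker P := by
    rw [Submodule.span_le]
    rintro x ⟨j, rfl⟩
    exact hPg j
  have h1 : n ≤ finrank K (ker P) := by
    have hmono : finrank K (Submodule.span K (Set.range g)) ≤ finrank K (ker P) :=
      Submodule.finrank_mono hle
    rwa [finrank_span_eq_card hg, Fintype.card_fin] at hmono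
  have h2 : finrank K (ker P) ≤ d := kerdim τ hτ hinj hfix d u hud
  omega

/-- Easy direction: scaling `g` by a scalar keeps the span (one inclusion). -/
lemma theta_smul_le (q s : ℕ) {n k : ℕ} (g : Fin n → L) (α : L) :
    Submodule.span L (Set.range fun i : Fin k => fun j => (α • g) j ^ q ^ (s * (i : ℕ)))
      ≤ Submodule.span L (Set.range fun i : Fin k => fun j => g j ^ q ^ (s * (i : ℕ))) := by
  rw [Submodule.span_le]
  rintro x ⟨i, rfl⟩
  have : (fun j => (α • g) j ^ q ^ (s * (i : ℕ)))
      = α ^ q ^ (s * (i : ℕ)) • fun j => g j ^ q ^ (s * (i : ℕ)) := by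
    funext j
    simp [mul_pow]
  have hx : (fun j => (α • g) j ^ q ^ (s * (i : ℕ)))
      ∈ Submodule.span L (Set.range fun i : Fin k => fun j => g j ^ q ^ (s * (i : ℕ))) := by
    rw [this]
    exact Submodule.smul_mem _ _ (Submodule.subset_span (Set.mem_range_self i))
  exact hx

lemma theta_smul_eq (q s : ℕ) {n k : ℕ} (g : Fin n → L) (α : L) (hα : α ≠ 0) :
    Submodule.span L (Set.range fun i : Fin k => fun j => (α • g) j ^ q ^ (s * (i : ℕ)))
      = Submodule.span L (Set.range fun i : Fin k => fun j => g j ^ q ^ (s * (i : ℕ))) := by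
  refine le_antisymm (theta_smul_le q s g α) ?_
  have h := theta_smul_le (L := L) (n := n) (k := k) q s (α • g) α⁻¹
  rwa [smul_smul, inv_mul_cancel₀ hα, one_smul] at h

/-- Hard direction: equal Gabidulin spans force proportional generator vectors. -/
lemma span_eq_imp (τ : L →+* L) (hτ : ∀ a : K, τ (algebraMap K L a) = algebraMap K L a)
    (hinj : Function.Injective τ)
    (hfix : ∀ x : L, τ x = x → ∃ a : K, algebraMap K L a = x)
    (q s : ℕ) (hτpow : ∀ (i : ℕ) (x : L), (⇑τ)^[i] x = x ^ q ^ (s * i))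
    {n k : ℕ} (hk : 0 < k) (hkn : k < n)
    (g g' : Fin n → L) (hg : LinearIndependent K g) (hg' : LinearIndependent K g')
    (hspan : Submodule.span L (Set.range fun i : Fin k => fun j => g' j ^ q ^ (s * (i : ℕ)))
      = Submodule.span L (Set.range fun i : Fin k => fun j => g j ^ q ^ (s * (i : ℕ)))) :
    ∃ α : L, α ≠ 0 ∧ g' = α • g := by
  classical
  have hn : 0 < n := lt_trans hk hkn
  -- rows in τ-iterate form
  have hrow : ∀ (h : Fin n → L) (i : ℕ),
      (fun j => h j ^ q ^ (s * i)) = fun j => (⇑τ)^[i] (h j) := by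
    intro h i; funext j; rw [hτpow]
  -- membership of a row of g' in the span of rows of g, coefficient extraction
  have hmem : ∀ (i : Fin k), ∃ b : Fin k → L,
      ∀ j, (⇑τ)^[(i : ℕ)] (g' j) = ∑ l ∈ range k, (fun l' => if h : l' < k then b ⟨l', h⟩ else 0) l
        * (⇑τ)^[l] (g j) := by
    intro i
    have h1 : (fun j => g' j ^ q ^ (s * (i : ℕ)))
        ∈ Submodule.span L (Set.range fun i : Fin k => fun j => g j ^ q ^ (s * (i : ℕ))) := by
      rw [← hspan]
      exact Submodule.subset_span (Set.mem_range_self i)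
    rw [Submodule.mem_span_range_iff_exists_fun] at h1
    obtain ⟨b, hb⟩ := h1
    refine ⟨b, fun j => ?_⟩
    have := congrFun hb j
    simp only [Finset.sum_apply, Pi.smul_apply, smul_eq_mul] at this
    rw [hτpow (i : ℕ) (g' j), ← this]
    rw [← Fin.sum_univ_eq_sum_range
      (fun l => (fun l' => if h : l' < k then b ⟨l', h⟩ else 0) l * (⇑τ)^[l] (g j)) k]
    refine (Finset.sum_congr rfl fun l _ => ?_).symm
    show (if h : (l : ℕ) < k then b ⟨(l : ℕ), h⟩ else 0) * (⇑τ)^[(l : ℕ)] (g j)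
      = b l * g j ^ q ^ (s * (l : ℕ))
    rw [dif_pos l.isLt, hτpow]
  obtain ⟨a, ha⟩ := hmem ⟨0, hk⟩
  set ca : ℕ → L := fun l' => if h : l' < k then a ⟨l', h⟩ else 0 with hca
  have heq : ∀ j, g' j = ∑ l ∈ range k, ca l * (⇑τ)^[l] (g j) := by
    intro j
    have := ha j
    simpa using this
  -- the downward induction killing higher coefficients
  have main : ∀ jj : ℕ, ∀ i : ℕ, k - jj ≤ i → 1 ≤ i → ca i = 0 := by
    intro jj
    induction jj with
    | zero =>
      intro i hi _
      exact dif_neg (by omega)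
    | succ jj ih =>
      intro i hi h1
      by_cases hcase : k - jj ≤ i
      · exact ih i hcase h1
      · -- i = k - (jj + 1), set j := jj + 1 ≤ k - 1
        have hik : i = k - (jj + 1) := by omega
        set j := jj + 1 with hj
        have hjk : j ≤ k - 1 := by omega
        have hjlt : j < k := by omega
        obtain ⟨b, hb⟩ := hmem ⟨j, hjlt⟩
        set cb : ℕ → L := fun l' => if h : l' < k then b ⟨l', h⟩ else 0 with hcb
        -- τ^[j] applied to heq
        have hder : ∀ j₂, (⇑τ)^[j] (g' j₂)
            = ∑ l ∈ range k, (⇑τ)^[j] (ca l) * (⇑τ)^[j + l] (g j₂) := by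
          intro j₂
          rw [heq j₂, ← RingHom.coe_pow, map_sum]
          refine Finset.sum_congr rfl fun l _ => ?_
          rw [RingHom.coe_pow, iterate_map_mul, ← Function.iterate_add_apply]
        -- combine with hb into a length-(k+1) relation
        set cu : ℕ → L := fun l => cb l - (if j ≤ l then (⇑τ)^[j] (ca (l - j)) else 0) with hcu
        have hzero : ∀ j₂, ∑ l ∈ range (k + 1), cu l * (⇑τ)^[l] (g j₂) = 0 := by
          intro j₂
          have hsplit : ∑ l ∈ range (k + 1), cu l * (⇑τ)^[l] (g j₂)
              = (∑ l ∈ range (k + 1), cb l * (⇑τ)^[l] (g j₂))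
                - ∑ l ∈ range (k + 1),
                    (if j ≤ l then (⇑τ)^[j] (ca (l - j)) else 0) * (⇑τ)^[l] (g j₂) := by
            rw [← Finset.sum_sub_distrib]
            exact Finset.sum_congr rfl fun l _ => by rw [hcu]; ring
          have hS1 : ∑ l ∈ range (k + 1), cb l * (⇑τ)^[l] (g j₂) = (⇑τ)^[j] (g' j₂) := by
            rw [Finset.sum_range_succ]
            have : cb k = 0 := dif_neg (by omega)
            rw [this, zero_mul, add_zero, ← hb j₂]
          have hS2 : ∑ l ∈ range (k + 1),
              (if j ≤ l then (⇑τ)^[j] (ca (l - j)) else 0) * (⇑τ)^[l] (g j₂)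
              = (⇑τ)^[j] (g' j₂) := by
            have hIco : Finset.Ico j (k + 1) ⊆ range (k + 1) := by
              rw [Finset.range_eq_Ico]
              exact Finset.Ico_subset_Ico (Nat.zero_le _) le_rfl
            rw [← Finset.sum_subset hIco]
            · rw [Finset.sum_Ico_eq_sum_range]
              have hstep : ∀ l ∈ Finset.range (k + 1 - j),
                  (if j ≤ j + l then (⇑τ)^[j] (ca (j + l - j)) else 0) * (⇑τ)^[j + l] (g j₂)
                    = (⇑τ)^[j] (ca l) * (⇑τ)^[j + l] (g j₂) := by
                intro l _
                rw [if_pos (Nat.le_add_right j l), Nat.add_sub_cancel_left]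
              rw [Finset.sum_congr rfl hstep]
              rw [hder j₂]
              refine Finset.sum_subset (Finset.range_subset_range.2 (by omega : k + 1 - j ≤ k)) ?_
              intro l hlk hl
              have hl1 : k + 1 - j ≤ l := by simpa using hl
              have : ca l = 0 := ih l (by omega) (by omega)
              rw [this, iterate_map_zero, zero_mul]
            · intro l hl hnl
              rw [Finset.mem_range] at hl
              rw [Finset.mem_Ico] at hnl
              rw [if_neg (by omega), zero_mul]
          rw [hsplit, hS1, hS2, sub_self]
        -- Moore independence of k+1 rows of g
        have hz := moore_indep τ hτ hinj hfix g hg (k + 1) (by omega) cu hzero k (by omega)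
        have : (⇑τ)^[j] (ca (k - j)) = 0 := by
          have hcbk : cb k = 0 := dif_neg (by omega)
          rw [hcu] at hz
          simp only [hcbk, if_pos (by omega : j ≤ k), zero_sub, neg_eq_zero] at hz
          exact hz
        have hca0 : ca (k - j) = 0 := by
          have hinj' : Function.Injective (⇑τ)^[j] := Function.Injective.iterate hinj j
          have := hinj' (a₂ := 0) (by rw [this, iterate_map_zero])
          exact this
        rwa [hik]
  -- conclude : ca i = 0 for all i ≥ 1
  have hca1 : ∀ i, 1 ≤ i → ca i = 0 := fun i hi => main (k - 1) i (by omega) hi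
  refine ⟨ca 0, ?_, ?_⟩
  · intro h0
    have hg'0 : g' = 0 := by
      funext j
      show g' j = (0 : L)
      rw [heq j]
      refine Finset.sum_eq_zero fun l _ => ?_
      rcases Nat.eq_zero_or_pos l with rfl | hl1
      · rw [h0, zero_mul]
      · rw [hca1 l hl1, zero_mul]
    exact hg'.ne_zero ⟨0, hn⟩ (by rw [hg'0]; rfl)
  · funext j
    rw [Pi.smul_apply, smul_eq_mul, heq j]
    rw [Finset.sum_eq_single 0]
    · rw [Function.iterate_zero_apply]
    · intro l _ hl0
      rw [hca1 l (by omega), zero_mul]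
    · intro h0; exact absurd (Finset.mem_range.2 hk) h0

/-- Fixed points of `x ↦ x ^ q ^ s` are in the image of `K` when `gcd(s,m) = 1`. -/
lemma fix_lemma (q m s : ℕ) (hq : Fintype.card K = q) (hm : Module.finrank K L = m)
    (hm2 : 2 ≤ m) (hsm : Nat.Coprime s m) :
    ∀ x : L, x ^ q ^ s = x → ∃ a : K, algebraMap K L a = x := by
  intro x hx
  classical
  have hq2 : 2 ≤ q := by rw [← hq]; exact Fintype.one_lt_card
  have hcardL : Fintype.card L = q ^ m := by rw [← hq, ← hm]; exact card_eq_pow_finrank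
  have hpm : ∀ y : L, y ^ q ^ m = y := fun y => by
    rw [← hcardL]; exact FiniteField.pow_card y
  have hpows : ∀ t, x ^ q ^ (s * t) = x := by
    intro t
    induction t with
    | zero => simp
    | succ t ih =>
      have h1 : s * (t + 1) = s * t + s := by ring
      rw [h1, pow_add, pow_mul, ih, hx]
  have hpowm : ∀ (y : L) (t : ℕ), y ^ q ^ (m * t) = y := by
    intro y t
    induction t with
    | zero => simp
    | succ t ih =>
      have h1 : m * (t + 1) = m * t + m := by ring
      rw [h1, pow_add, pow_mul, ih, hpm]
  haveI : NeZero m := ⟨by omega⟩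
  haveI : Fact (1 < m) := ⟨by omega⟩
  set w := ((ZMod.unitOfCoprime s hsm)⁻¹ : (ZMod m)ˣ) with hw
  set u := (w : ZMod m).val with hu
  have hsu : (s * u) % m = 1 := by
    have husm : ((u : ℕ) : ZMod m) = (w : ZMod m) := ZMod.natCast_rightInverse _
    have h1 : ((s * u : ℕ) : ZMod m) = 1 := by
      push_cast
      rw [husm, ← ZMod.coe_unitOfCoprime s hsm, ← Units.val_mul, hw, mul_inv_cancel,
        Units.val_one]
    have h2 := ZMod.val_natCast (n := m) (s * u)
    rw [h1, ZMod.val_one] at h2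
    omega
  have hdecomp : s * u = m * (s * u / m) + 1 := by
    have := Nat.div_add_mod (s * u) m
    omega
  have hxq : x ^ q = x := by
    have h1 : x ^ q ^ (s * u) = x := hpows u
    rw [hdecomp, pow_add, pow_one, pow_mul, hpowm] at h1
    exact h1
  -- root counting for X^q - X
  set P : Polynomial L := Polynomial.X ^ q - Polynomial.X with hP
  have hdeg : P.natDegree = q := FiniteField.X_pow_card_sub_X_natDegree_eq L hq2
  have hP0 : P ≠ 0 := FiniteField.X_pow_card_sub_X_ne_zero L hq2
  have hroot : ∀ y : L, y ^ q = y → y ∈ P.roots.toFinset := by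
    intro y hy
    rw [Multiset.mem_toFinset, Polynomial.mem_roots hP0]
    simp [Polynomial.IsRoot, hP, sub_eq_zero, hy]
  set T : Finset L := Finset.univ.image (algebraMap K L) with hT
  have hTsub : T ⊆ P.roots.toFinset := by
    intro y hy
    rw [hT, Finset.mem_image] at hy
    obtain ⟨a, -, rfl⟩ := hy
    apply hroot
    rw [← map_pow]
    congr 1
    rw [← hq]
    exact FiniteField.pow_card a
  have hTcard : T.card = q := by
    rw [hT, Finset.card_image_of_injective _ (algebraMap K L).injective, Finset.card_univ, hq]
  have hRcard : P.roots.toFinset.card ≤ q :=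
    le_trans (Multiset.toFinset_card_le _) (by rw [← hdeg]; exact P.card_roots')
  have hTR : T = P.roots.toFinset :=
    Finset.eq_of_subset_of_card_le hTsub (by omega)
  have hxT : x ∈ T := by rw [hTR]; exact hroot x hxq
  rw [hT, Finset.mem_image] at hxT
  obtain ⟨a, -, ha⟩ := hxT
  exact ⟨a, ha⟩

end AuxGabidulin

open LinearMap Module Finset
set_option maxHeartbeats 1000000

/-- the number of distinct `k`-dimensional generalized Gabidulin codes of
length `n` and parameter `s` over `𝔽_{q^m}` equals `∏_{i=1}^{n-1} (q^m - q^i)`. -/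
theorem stmt13 {K L : Type*} [Field K] [Field L] [Algebra K L] [Fintype K] [Fintype L]
    (q m k n s : ℕ) (hq : Fintype.card K = q) (hm : Module.finrank K L = m)
    (hk : 0 < k) (hkn : k < n) (hnm : n ≤ m) (hs : 0 < s) (hsm : Nat.Coprime s m) :
    Set.ncard {C : Submodule L (Fin n → L) | ∃ g : Fin n → L, rkq K g = n ∧
        C = Submodule.span L (Set.range fun i : Fin k => fun j => g j ^ q ^ (s * (i : ℕ)))} =
      ∏ i ∈ Finset.range (n - 1), (q ^ m - q ^ (i + 1)) := by
  classical
  have hn : 0 < n := lt_trans hk hkn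
  have hn2 : 2 ≤ n := by omega
  have hm2 : 2 ≤ m := le_trans hn2 hnm
  have hq2 : 2 ≤ q := by rw [← hq]; exact Fintype.one_lt_card
  -- construct the Frobenius-type ring hom τ
  set pK := ringChar K with hpK
  have hprime : pK.Prime :=
    (CharP.char_is_prime_or_zero K pK).resolve_right (CharP.char_ne_zero_of_finite K pK)
  obtain ⟨f, -, hqpf⟩ := FiniteField.card K pK
  have hqf : q = pK ^ (f : ℕ) := by rw [← hq, hqpf]
  haveI : CharP L pK := charP_of_injective_algebraMap (algebraMap K L).injective pK
  haveI : Fact pK.Prime := ⟨hprime⟩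
  set τ : L →+* L := iterateFrobenius L pK ((f : ℕ) * s) with hτdef0
  have hτdef : ∀ x : L, τ x = x ^ q ^ s := by
    intro x
    rw [hτdef0, _root_.iterateFrobenius_def, hqf, ← pow_mul]
  have hτpow : ∀ (i : ℕ) (x : L), (⇑τ)^[i] x = x ^ q ^ (s * i) := by
    intro i
    induction i with
    | zero => intro x; simp
    | succ i ih =>
      intro x
      have hsi : s * (i + 1) = s * i + s := by ring
      rw [Function.iterate_succ_apply', ih, hτdef, ← pow_mul, ← pow_add, hsi]
  have hτK : ∀ a : K, τ (algebraMap K L a) = algebraMap K L a := by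
    intro a
    rw [hτdef, ← map_pow]
    congr 1
    rw [← hq]
    exact FiniteField.pow_card_pow s a
  have hinj : Function.Injective τ := τ.injective
  have hfix : ∀ x : L, τ x = x → ∃ a : K, algebraMap K L a = x := by
    intro x hx
    exact fix_lemma q m s hq hm hm2 hsm x (by rwa [hτdef] at hx)
  -- rank-q condition = linear independence
  have hrk : ∀ g : Fin n → L, rkq K g = n ↔ LinearIndependent K g := by
    intro g
    rw [linearIndependent_iff_card_eq_finrank_span, Fintype.card_fin]
    exact eq_comm
  -- the counting
  set θ : (Fin n → L) → Submodule L (Fin n → L) := fun g =>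
    Submodule.span L (Set.range fun i : Fin k => fun j => g j ^ q ^ (s * (i : ℕ))) with hθ
  set Gset : Finset (Fin n → L) := Finset.univ.filter (fun g => LinearIndependent K g) with hG
  set S : Finset (Submodule L (Fin n → L)) := Gset.image θ with hS
  have hsetEq : {C : Submodule L (Fin n → L) | ∃ g : Fin n → L, rkq K g = n ∧
      C = Submodule.span L (Set.range fun i : Fin k => fun j => g j ^ q ^ (s * (i : ℕ)))}
      = ↑S := by
    ext C
    simp only [Set.mem_setOf_eq, hS, Finset.coe_image, Set.mem_image, Finset.mem_coe, hG,
      Finset.mem_filter, Finset.mem_univ, true_and]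
    constructor
    · rintro ⟨g, hg1, rfl⟩
      exact ⟨g, (hrk g).1 hg1, rfl⟩
    · rintro ⟨g, hg1, rfl⟩
      exact ⟨g, (hrk g).2 hg1, rfl⟩
  rw [hsetEq, Set.ncard_coe_finset]
  -- fiber cardinality
  have hfiber : ∀ g₀ ∈ Gset, (Gset.filter (fun g' => θ g' = θ g₀)).card = Fintype.card Lˣ := by
    intro g₀ hg₀
    rw [hG, Finset.mem_filter] at hg₀
    have hg0 : LinearIndependent K g₀ := hg₀.2
    rw [← Finset.card_univ]
    refine (Finset.card_bij (fun (α : Lˣ) _ => (α : L) • g₀) ?_ ?_ ?_).symm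
    · intro α _
      rw [Finset.mem_filter]
      constructor
      · rw [hG, Finset.mem_filter]
        refine ⟨Finset.mem_univ _, ?_⟩
        have hker : ker (LinearMap.mulLeft K (α : L)) = ⊥ := by
          rw [LinearMap.ker_eq_bot]
          intro x y hxy
          exact mul_left_cancel₀ α.ne_zero hxy
        have := hg0.map' (LinearMap.mulLeft K (α : L)) hker
        exact this
      · exact theta_smul_eq q s g₀ (α : L) α.ne_zero
    · intro α _ β _ hab
      obtain ⟨j, hj⟩ : ∃ j, g₀ j ≠ 0 := ⟨⟨0, hn⟩, hg0.ne_zero ⟨0, hn⟩⟩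
      have := congrFun hab j
      simp only [Pi.smul_apply, smul_eq_mul] at this
      exact Units.ext (mul_right_cancel₀ hj this)
    · intro g' hg'
      rw [Finset.mem_filter] at hg'
      obtain ⟨hg'1, hg'2⟩ := hg'
      rw [hG, Finset.mem_filter] at hg'1
      obtain ⟨α, hα, hgα⟩ := span_eq_imp τ hτK hinj hfix q s hτpow hk hkn g₀ g' hg0 hg'1.2 hg'2
      exact ⟨Units.mk0 α hα, Finset.mem_univ _, hgα.symm⟩
  -- total count
  have htotal : Gset.card = ∑ C ∈ S, (Gset.filter (fun g' => θ g' = C)).card :=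
    Finset.card_eq_sum_card_fiberwise (fun g hg => Finset.mem_image_of_mem θ hg)
  have hconst : ∀ C ∈ S, (Gset.filter (fun g' => θ g' = C)).card = Fintype.card Lˣ := by
    intro C hC
    rw [hS, Finset.mem_image] at hC
    obtain ⟨g₀, hg₀, rfl⟩ := hC
    exact hfiber g₀ hg₀
  have htot2 : Gset.card = S.card * Fintype.card Lˣ := by
    rw [htotal, Finset.sum_congr rfl hconst, Finset.sum_const, smul_eq_mul]
  -- the cardinality of Gset
  have hGcard : Gset.card = ∏ i ∈ Finset.range n, (q ^ m - q ^ i) := by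
    have h1 := card_linearIndependent (K := K) (V := L) (k := n) (by rw [hm]; exact hnm)
    have h2 : Gset.card = Nat.card {g : Fin n → L // LinearIndependent K g} := by
      rw [Nat.card_eq_fintype_card, hG]
      convert (Fintype.card_subtype (fun g : Fin n → L => LinearIndependent K g)).symm using 2
    rw [h2, h1, hq, hm]
    exact Fin.prod_univ_eq_prod_range (fun i => q ^ m - q ^ i) n
  -- card of units
  have hLcard : Fintype.card Lˣ = q ^ m - 1 := by
    rw [Fintype.card_units]
    congr 1
    rw [← hq, ← hm]
    exact card_eq_pow_finrank
  have hsplit : ∏ i ∈ Finset.range n, (q ^ m - q ^ i)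
      = (∏ i ∈ Finset.range (n - 1), (q ^ m - q ^ (i + 1))) * (q ^ m - 1) := by
    have hn' : n = (n - 1) + 1 := by omega
    rw [hn', Finset.prod_range_succ']
    simp
  have hpos : 0 < q ^ m - 1 := by
    have : 1 < q ^ m := Nat.one_lt_pow (by omega) (by omega)
    omega
  refine Nat.eq_of_mul_eq_mul_right hpos ?_
  rw [hLcard] at htot2
  rw [← htot2, hGcard, hsplit]
end
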